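/- arXiv:1008.1348 — 6 statements merged into one kernel-verified Lean document; each statement's English description precedes it below -/
import Mathlib

section
/- A partially symmetric polynomial p(x_1,...,x_a, y_1,...,y_b), symmetric separately in the x-variables and in the y-variables, is supersymmetric (i.e. the substitution x_1 = t = y_1 yields a polynomial independent of t) for every elementary supersymmetric polynomial e_j(x,y) = ∑_{s=0}^{j} (-1)^s h_{j-s}(x) e_s(y). -/
open MvPolynomial

noncomputable section

lemma aeval_hsymm_multiset {σ A : Type*} [Fintype σ] [DecidableEq σ] [CommRing A] [Algebra ℚ A]
    (f : σ → A) (n : ℕ) :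
    aeval f (hsymm σ ℚ n) = ∑ μ : Sym σ n, (μ.1.map f).prod := by
  simp only [hsymm, map_sum]
  refine Finset.sum_congr rfl fun μ _ => ?_
  rw [map_multiset_prod, Multiset.map_map]
  simp [Function.comp_def]

lemma aeval_hsymm_rec {σ A : Type*} [Fintype σ] [DecidableEq σ] [CommRing A] [Algebra ℚ A]
    (f : σ → A) (i0 : σ) (n : ℕ) :
    aeval f (hsymm σ ℚ (n + 1)) =
      f i0 * aeval f (hsymm σ ℚ n) + aeval (Function.update f i0 0) (hsymm σ ℚ (n + 1)) := by
  classical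
  rw [aeval_hsymm_multiset, aeval_hsymm_multiset, aeval_hsymm_multiset]
  rw [← Finset.sum_filter_add_sum_filter_not Finset.univ (fun μ : Sym σ (n+1) => i0 ∈ μ)]
  congr 1
  · -- sum over μ containing i0 equals f i0 * full sum over Sym σ n
    rw [Finset.mul_sum]
    refine Finset.sum_bij'
      (fun μ hμ => μ.erase i0 (by simpa using (Finset.mem_filter.mp hμ).2))
      (fun ν _ => i0 ::ₛ ν) (fun μ hμ => Finset.mem_univ _)
      (fun ν hν => by simp [Sym.mem_cons_self]) ?_ ?_ ?_
    · intro μ hμ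
      exact Sym.cons_erase _
    · intro ν hν
      exact Sym.erase_cons_head _ _ _
    · intro μ hμ
      have h : i0 ∈ μ := by simpa using (Finset.mem_filter.mp hμ).2
      have hmul : ∀ (M : Multiset σ), i0 ∈ M →
          (M.map f).prod = f i0 * ((M.erase i0).map f).prod := by
        intro M hM
        conv_lhs => rw [← Multiset.cons_erase hM]
        rw [Multiset.map_cons, Multiset.prod_cons]
      exact hmul μ.1 h
  · -- sum over μ not containing i0 equals full sum with f updated to 0 at i0
    have hzero : ∑ μ ∈ Finset.filter (fun μ : Sym σ (n+1) => i0 ∈ μ) Finset.univ,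
        (μ.1.map (Function.update f i0 0)).prod = 0 := by
      refine Finset.sum_eq_zero fun μ hμ => ?_
      have h : i0 ∈ μ := by simpa using (Finset.mem_filter.mp hμ).2
      refine Multiset.prod_eq_zero ?_
      refine Multiset.mem_map.mpr ⟨i0, h, ?_⟩
      simp
    conv_rhs => rw [← Finset.sum_filter_add_sum_filter_not Finset.univ
        (fun μ : Sym σ (n+1) => i0 ∈ μ) (fun μ => (μ.1.map (Function.update f i0 0)).prod)]
    rw [hzero, zero_add]
    refine Finset.sum_congr rfl fun μ hμ => ?_
    have h : i0 ∉ μ := by simpa using (Finset.mem_filter.mp hμ).2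
    congr 1
    refine (Multiset.map_congr rfl fun x hx => ?_).symm
    have : x ≠ i0 := fun hxx => h (hxx ▸ hx)
    rw [Function.update_of_ne this]

lemma Multiset.esymm_cons' {A : Type*} [CommRing A] (a : A) (m : Multiset A) (n : ℕ) :
    (a ::ₘ m).esymm (n + 1) = m.esymm (n + 1) + a * m.esymm n := by
  simp only [Multiset.esymm]
  rw [Multiset.powersetCard_cons, Multiset.map_add, Multiset.sum_add]
  congr 1
  rw [Multiset.map_map, ← Multiset.sum_map_mul_left]
  refine congrArg _ (Multiset.map_congr rfl fun s _ => ?_)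
  simp [Multiset.prod_cons]

lemma Multiset.esymm_zero_cons {A : Type*} [CommRing A] (m : Multiset A) (n : ℕ) :
    ((0 : A) ::ₘ m).esymm n = m.esymm n := by
  cases n with
  | zero => simp [Multiset.esymm]
  | succ n => rw [Multiset.esymm_cons']; ring

lemma aeval_esymm_rec {σ A : Type*} [Fintype σ] [DecidableEq σ] [CommRing A] [Algebra ℚ A]
    (f : σ → A) (i0 : σ) (n : ℕ) :
    aeval f (esymm σ ℚ (n + 1)) =
      aeval (Function.update f i0 0) (esymm σ ℚ (n + 1)) +
        f i0 * aeval (Function.update f i0 0) (esymm σ ℚ n) := by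
  classical
  rw [aeval_esymm_eq_multiset_esymm, aeval_esymm_eq_multiset_esymm, aeval_esymm_eq_multiset_esymm]
  have hmem : i0 ∈ (Finset.univ.val : Multiset σ) := Finset.mem_univ_val _
  have hsplit : (Finset.univ.val : Multiset σ) = i0 ::ₘ Finset.univ.val.erase i0 :=
    (Multiset.cons_erase hmem).symm
  have hmapeq : (Finset.univ.val.erase i0).map (Function.update f i0 0)
      = (Finset.univ.val.erase i0).map f := by
    refine Multiset.map_congr rfl fun x hx => ?_
    have hx' : x ≠ i0 := (Finset.univ.nodup.mem_erase_iff.mp hx).1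
    rw [Function.update_of_ne hx']
  rw [hsplit, Multiset.map_cons, Multiset.map_cons, Function.update_self, hmapeq,
    Multiset.esymm_cons', Multiset.esymm_zero_cons]
  cases n with
  | zero => simp [Multiset.esymm]
  | succ n => rw [Multiset.esymm_zero_cons]

/-- The `j`-th elementary supersymmetric polynomial
`e_j(x,y) = ∑_{s=0}^{j} (-1)^s h_{j-s}(x) e_s(y)` in the variables
`x_1,…,x_a` (the `Sum.inl` variables) and `y_1,…,y_b` (the `Sum.inr` variables). -/
noncomputable def superElem (a b j : ℕ) : MvPolynomial (Fin a ⊕ Fin b) ℚ :=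
  ∑ s ∈ Finset.range (j + 1),
    (-1 : MvPolynomial (Fin a ⊕ Fin b) ℚ) ^ s *
      rename Sum.inl (hsymm (Fin a) ℚ (j - s)) * rename Sum.inr (esymm (Fin b) ℚ s)

/-- Every elementary supersymmetric polynomial `e_j(x,y)` is supersymmetric:
substituting `x_1 = t = y_1` (here `t` is the variable of the outer `Polynomial` ring)
yields a polynomial independent of `t`, i.e. a constant polynomial in `t`. -/
theorem superElem_supersymmetric (a b j : ℕ) (ha : 0 < a) (hb : 0 < b) :
    ∃ c : MvPolynomial (Fin a ⊕ Fin b) ℚ,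
      aeval (fun v : Fin a ⊕ Fin b =>
          match v with
          | Sum.inl i => if i = (⟨0, ha⟩ : Fin a) then Polynomial.X
              else Polynomial.C (X (Sum.inl i))
          | Sum.inr i => if i = (⟨0, hb⟩ : Fin b) then Polynomial.X
              else Polynomial.C (X (Sum.inr i)))
        (superElem a b j) = Polynomial.C c := by
  classical
  set R := MvPolynomial (Fin a ⊕ Fin b) ℚ
  set f : Fin a ⊕ Fin b → Polynomial R := fun v =>
    match v with
    | Sum.inl i => if i = (⟨0, ha⟩ : Fin a) then Polynomial.X
        else Polynomial.C (X (Sum.inl i))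
    | Sum.inr i => if i = (⟨0, hb⟩ : Fin b) then Polynomial.X
        else Polynomial.C (X (Sum.inr i)) with hf
  set gx : Fin a → R := fun i => if i = (⟨0, ha⟩ : Fin a) then 0 else X (Sum.inl i) with hgx
  set gy : Fin b → R := fun i => if i = (⟨0, hb⟩ : Fin b) then 0 else X (Sum.inr i) with hgy
  have hfx : Function.update (f ∘ Sum.inl) (⟨0, ha⟩ : Fin a) 0
      = fun i => Polynomial.C (gx i) := by
    funext i
    by_cases h : i = (⟨0, ha⟩ : Fin a)
    · subst h; simp [hgx]
    · simp [Function.update_of_ne h, hf, hgx, h]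
  have hfy : Function.update (f ∘ Sum.inr) (⟨0, hb⟩ : Fin b) 0
      = fun i => Polynomial.C (gy i) := by
    funext i
    by_cases h : i = (⟨0, hb⟩ : Fin b)
    · subst h; simp [hgy]
    · simp [Function.update_of_ne h, hf, hgy, h]
  have haevC : ∀ {τ : Type} [Fintype τ] (g : τ → R) (p : MvPolynomial τ ℚ),
      aeval (fun i => Polynomial.C (g i)) p = Polynomial.C (aeval g p) := by
    intro τ _ g p
    have := MvPolynomial.comp_aeval (φ := Polynomial.CAlgHom (R := ℚ) (A := R)) (f := g)
    have h2 := congrFun (congrArg DFunLike.coe this) p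
    simpa [Function.comp_def, Polynomial.CAlgHom] using h2.symm
  set HH : ℕ → Polynomial R := fun m => aeval (f ∘ Sum.inl) (hsymm (Fin a) ℚ m) with hHH
  set EE : ℕ → Polynomial R := fun s => aeval (f ∘ Sum.inr) (esymm (Fin b) ℚ s) with hEE
  set hh : ℕ → R := fun m => aeval gx (hsymm (Fin a) ℚ m) with hhh
  set ee : ℕ → R := fun s => aeval gy (esymm (Fin b) ℚ s) with hee
  have hfxi0 : (f ∘ Sum.inl) (⟨0, ha⟩ : Fin a) = Polynomial.X := by simp [hf]
  have hfyi0 : (f ∘ Sum.inr) (⟨0, hb⟩ : Fin b) = Polynomial.X := by simp [hf]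
  have hHrec : ∀ m, HH (m + 1) = Polynomial.X * HH m + Polynomial.C (hh (m + 1)) := by
    intro m
    rw [hHH, hhh]
    simp only
    rw [aeval_hsymm_rec (f ∘ Sum.inl) (⟨0, ha⟩ : Fin a) m, hfxi0, hfx, haevC]
  have hErec : ∀ s, EE (s + 1)
      = Polynomial.C (ee (s + 1)) + Polynomial.X * Polynomial.C (ee s) := by
    intro s
    rw [hEE, hee]
    simp only
    rw [aeval_esymm_rec (f ∘ Sum.inr) (⟨0, hb⟩ : Fin b) s, hfyi0, hfy, haevC, haevC]
  have hH0 : HH 0 = 1 := by simp [hHH, hsymm_zero]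
  have hE0 : EE 0 = 1 := by simp [hEE, esymm_zero]
  have hh0 : hh 0 = 1 := by simp [hhh, hsymm_zero]
  have hee0 : ee 0 = 1 := by simp [hee, esymm_zero]
  have key : ∀ j : ℕ, ∑ s ∈ Finset.range (j + 1), (-1 : Polynomial R) ^ s * HH (j - s) * EE s
      = Polynomial.C (∑ s ∈ Finset.range (j + 1), (-1 : R) ^ s * hh (j - s) * ee s) := by
    intro j
    induction j with
    | zero => simp [hH0, hE0, hh0, hee0]
    | succ j ih =>
      have hEdecomp : ∀ s, EE s = Polynomial.C (ee s) +
          Polynomial.X * (if s = 0 then 0 else Polynomial.C (ee (s - 1))) := by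
        intro s
        cases s with
        | zero => simp [hE0, hee0]
        | succ s => simpa using hErec s
      have step1 : ∑ s ∈ Finset.range (j + 2), (-1 : Polynomial R) ^ s * HH (j + 1 - s) * EE s
          = Polynomial.X *
              (∑ s ∈ Finset.range (j + 1), (-1 : Polynomial R) ^ s * HH (j - s) * EE s)
            + ∑ s ∈ Finset.range (j + 2),
                (-1 : Polynomial R) ^ s * Polynomial.C (hh (j + 1 - s)) * EE s := by
        rw [Finset.sum_range_succ (n := j + 1), Finset.sum_range_succ (n := j + 1)
          (f := fun s => (-1 : Polynomial R) ^ s * Polynomial.C (hh (j + 1 - s)) * EE s)]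
        have hlast : (-1 : Polynomial R) ^ (j+1) * HH (j + 1 - (j+1)) * EE (j+1)
            = (-1 : Polynomial R) ^ (j+1) * Polynomial.C (hh (j + 1 - (j+1))) * EE (j+1) := by
          simp [hH0, hh0]
        rw [hlast]
        have hmain : ∑ s ∈ Finset.range (j + 1), (-1 : Polynomial R) ^ s * HH (j + 1 - s) * EE s
            = Polynomial.X *
                (∑ s ∈ Finset.range (j + 1), (-1 : Polynomial R) ^ s * HH (j - s) * EE s)
              + ∑ s ∈ Finset.range (j + 1),
                  (-1 : Polynomial R) ^ s * Polynomial.C (hh (j + 1 - s)) * EE s := by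
          rw [Finset.mul_sum, ← Finset.sum_add_distrib]
          refine Finset.sum_congr rfl fun s hs => ?_
          have hs' : s ≤ j := Nat.lt_succ_iff.mp (Finset.mem_range.mp hs)
          have hsub : j + 1 - s = (j - s) + 1 := by omega
          rw [hsub, hHrec (j - s)]
          ring
        rw [hmain]
        ring
      have hshift : ∑ s ∈ Finset.range (j + 2), (-1 : Polynomial R) ^ s *
            Polynomial.C (hh (j + 1 - s)) *
            (if s = 0 then 0 else Polynomial.C (ee (s - 1)))
          = - Polynomial.C (∑ s ∈ Finset.range (j + 1), (-1 : R) ^ s * hh (j - s) * ee s) := by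
        rw [Finset.sum_range_succ']
        have h0 : (-1 : Polynomial R) ^ 0 * Polynomial.C (hh (j + 1 - 0)) *
            (if (0:ℕ) = 0 then 0 else Polynomial.C (ee (0 - 1))) = 0 := by simp
        rw [h0, add_zero]
        have : ∀ s ∈ Finset.range (j + 1), (-1 : Polynomial R) ^ (s+1) *
              Polynomial.C (hh (j + 1 - (s+1))) *
              (if s + 1 = 0 then 0 else Polynomial.C (ee (s + 1 - 1)))
            = - Polynomial.C ((-1 : R) ^ s * hh (j - s) * ee s) := by
          intro s _
          have hsub : j + 1 - (s + 1) = j - s := by omega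
          rw [if_neg (Nat.succ_ne_zero s), hsub, Nat.add_sub_cancel]
          push_cast [map_mul, map_pow, map_neg, map_one]
          ring
        rw [Finset.sum_congr rfl this, Finset.sum_neg_distrib, ← map_sum]
      have step2 : ∑ s ∈ Finset.range (j + 2),
            (-1 : Polynomial R) ^ s * Polynomial.C (hh (j + 1 - s)) * EE s
          = Polynomial.C (∑ s ∈ Finset.range (j + 2), (-1 : R) ^ s * hh (j + 1 - s) * ee s)
            - Polynomial.X *
              Polynomial.C (∑ s ∈ Finset.range (j + 1), (-1 : R) ^ s * hh (j - s) * ee s) := by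
        have hterm : ∀ s ∈ Finset.range (j + 2),
            (-1 : Polynomial R) ^ s * Polynomial.C (hh (j + 1 - s)) * EE s
            = Polynomial.C ((-1 : R) ^ s * hh (j + 1 - s) * ee s)
              + Polynomial.X * ((-1 : Polynomial R) ^ s * Polynomial.C (hh (j + 1 - s)) *
                  (if s = 0 then 0 else Polynomial.C (ee (s - 1)))) := by
          intro s _
          rw [hEdecomp s]
          push_cast [map_mul, map_pow, map_neg, map_one]
          ring
        rw [Finset.sum_congr rfl hterm, Finset.sum_add_distrib, ← Finset.mul_sum, hshift,
          ← map_sum]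
        ring
      rw [step1, ih, step2]
      ring
  refine ⟨∑ s ∈ Finset.range (j + 1), (-1 : R) ^ s * hh (j - s) * ee s, ?_⟩
  rw [← key j]
  rw [superElem, map_sum]
  refine Finset.sum_congr rfl fun s _ => ?_
  rw [map_mul, map_mul, map_pow, map_neg, map_one, aeval_rename, aeval_rename]
end
end

section
/- For any k ∈ ℕ, the assignment 1_λ ↦ 1_{λ - (k,k,...,k)} (interpreting 1_μ = 0 when μ ∉ Λ(n,d)) and E_{±i} ↦ E_{±i} defines a well-defined surjective algebra homomorphism π : Ṡ(n, d+nk) → Ṡ(n,d). -/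
noncomputable section

/-- The ground field `ℚ(q)`. -/
abbrev Fq : Type := RatFunc ℚ

/-- The formal parameter `q`. -/
noncomputable def qv : Fq := RatFunc.X

/-- The quantum integer `[a] = (q^a - q^{-a})/(q - q⁻¹)`. -/
noncomputable def qint (a : ℤ) : Fq := (qv ^ a - qv ^ (-a)) / (qv - qv⁻¹)

/-- `Λ(n,d) = {λ ∈ ℕⁿ : ∑ λ_i = d}`, realized as a finite set of `ℤ`-valued weights. -/
def lamFinset (n d : ℕ) : Finset (Fin n → ℤ) :=
  ((Finset.univ : Finset (Fin n → Fin (d + 1))).image fun f j => ((f j : ℕ) : ℤ)).filter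
    fun l => ∑ j, l j = (d : ℤ)

/-- The `i`-th coordinate, for `i = 1, …, n-1` (`0`-indexed). -/
def loIdx {n : ℕ} (i : Fin (n - 1)) : Fin n := ⟨i.1, by have := i.isLt; omega⟩

/-- The `(i+1)`-st coordinate. -/
def hiIdx {n : ℕ} (i : Fin (n - 1)) : Fin n := ⟨i.1 + 1, by have := i.isLt; omega⟩

/-- The simple root `α_i = ε_i - ε_{i+1}`. -/
def alphaWt {n : ℕ} (i : Fin (n - 1)) : Fin n → ℤ :=
  fun j => if j = loIdx i then 1 else if j = hiIdx i then -1 else 0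

/-- Generators of the idempotented `q`-Schur algebra `Ṡ(n,d)`:
idempotents `1_λ` for each weight `λ` and the `E_{±i}`. -/
inductive QGen (n : ℕ) : Type
  | wt : (Fin n → ℤ) → QGen n
  | up : Fin (n - 1) → QGen n
  | dn : Fin (n - 1) → QGen n

/-- The generator `1_λ` in the free algebra. -/
noncomputable def eF {n : ℕ} (l : Fin n → ℤ) : FreeAlgebra Fq (QGen n) :=
  FreeAlgebra.ι Fq (QGen.wt l)

/-- The generator `E_{+i}` in the free algebra. -/
noncomputable def epF {n : ℕ} (i : Fin (n - 1)) : FreeAlgebra Fq (QGen n) :=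
  FreeAlgebra.ι Fq (QGen.up i)

/-- The generator `E_{-i}` in the free algebra. -/
noncomputable def emF {n : ℕ} (i : Fin (n - 1)) : FreeAlgebra Fq (QGen n) :=
  FreeAlgebra.ι Fq (QGen.dn i)

/-- The defining relations of `Ṡ(n,d)`:  `1_λ 1_μ = δ_{λμ} 1_λ`, `∑_{λ ∈ Λ(n,d)} 1_λ = 1`,
`1_μ = 0` for `μ ∉ Λ(n,d)`, `E_{±i} 1_λ = 1_{λ ± α_i} E_{±i}` and
`E_i E_{-j} - E_{-j} E_i = δ_{ij} ∑_{λ ∈ Λ(n,d)} [λ_i - λ_{i+1}] 1_λ`. -/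
inductive QSRel (n d : ℕ) : FreeAlgebra Fq (QGen n) → FreeAlgebra Fq (QGen n) → Prop
  | orth (l m : Fin n → ℤ) : QSRel n d (eF l * eF m) (if l = m then eF l else 0)
  | unit : QSRel n d (∑ l ∈ lamFinset n d, eF l) 1
  | zero (l : Fin n → ℤ) (h : l ∉ lamFinset n d) : QSRel n d (eF l) 0
  | upComm (i : Fin (n - 1)) (l : Fin n → ℤ) :
      QSRel n d (epF i * eF l) (eF (l + alphaWt i) * epF i)
  | dnComm (i : Fin (n - 1)) (l : Fin n → ℤ) :
      QSRel n d (emF i * eF l) (eF (l - alphaWt i) * emF i)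
  | commutator (i j : Fin (n - 1)) :
      QSRel n d (epF i * emF j - emF j * epF i)
        (if i = j then ∑ l ∈ lamFinset n d, qint (l (loIdx i) - l (hiIdx i)) • eF l else 0)

/-- The idempotented `q`-Schur algebra `Ṡ(n,d)`, presented by generators and relations. -/
abbrev QSchur (n d : ℕ) : Type := RingQuot (QSRel n d)

/-- The idempotent `1_λ ∈ Ṡ(n,d)`. -/
noncomputable def qe {n d : ℕ} (l : Fin n → ℤ) : QSchur n d :=
  RingQuot.mkAlgHom Fq (QSRel n d) (eF l)

/-- The generator `E_{+i} ∈ Ṡ(n,d)`. -/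
noncomputable def qep {n d : ℕ} (i : Fin (n - 1)) : QSchur n d :=
  RingQuot.mkAlgHom Fq (QSRel n d) (epF i)

/-- The generator `E_{-i} ∈ Ṡ(n,d)`. -/
noncomputable def qem {n d : ℕ} (i : Fin (n - 1)) : QSchur n d :=
  RingQuot.mkAlgHom Fq (QSRel n d) (emF i)

lemma mem_lamFinset {n d : ℕ} {l : Fin n → ℤ} :
    l ∈ lamFinset n d ↔ (∀ j, 0 ≤ l j) ∧ ∑ j, l j = (d : ℤ) := by
  unfold lamFinset
  simp only [Finset.mem_filter, Finset.mem_image, Finset.mem_univ, true_and]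
  constructor
  · rintro ⟨⟨f, rfl⟩, hs⟩
    exact ⟨fun j => Int.ofNat_nonneg _, hs⟩
  · rintro ⟨hpos, hs⟩
    refine ⟨⟨fun j => ⟨(l j).toNat, ?_⟩, ?_⟩, hs⟩
    · have h1 : l j ≤ ∑ i, l i :=
        Finset.single_le_sum (fun i _ => hpos i) (Finset.mem_univ j)
      rw [hs] at h1
      omega
    · funext j
      simp [Int.toNat_of_nonneg (hpos j)]

lemma qe_zero {n d : ℕ} {l : Fin n → ℤ} (h : l ∉ lamFinset n d) :
    (qe l : QSchur n d) = 0 := by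
  have := RingQuot.mkAlgHom_rel Fq (QSRel.zero (d := d) l h)
  simpa [qe] using this

lemma qe_mul {n d : ℕ} (l m : Fin n → ℤ) :
    (qe l : QSchur n d) * qe m = if l = m then qe l else 0 := by
  have h := RingQuot.mkAlgHom_rel Fq (QSRel.orth (n := n) (d := d) l m)
  by_cases hc : l = m
  · simpa [qe, hc] using h
  · simpa [qe, hc] using h

lemma qe_sum_one {n d : ℕ} : ∑ l ∈ lamFinset n d, (qe l : QSchur n d) = 1 := by
  have h := RingQuot.mkAlgHom_rel Fq (QSRel.unit (n := n) (d := d))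
  simpa [qe, map_sum] using h

lemma qep_qe {n d : ℕ} (i : Fin (n - 1)) (l : Fin n → ℤ) :
    (qep i : QSchur n d) * qe l = qe (l + alphaWt i) * qep i := by
  have h := RingQuot.mkAlgHom_rel Fq (QSRel.upComm (n := n) (d := d) i l)
  simpa [qe, qep, map_mul] using h

lemma qem_qe {n d : ℕ} (i : Fin (n - 1)) (l : Fin n → ℤ) :
    (qem i : QSchur n d) * qe l = qe (l - alphaWt i) * qem i := by
  have h := RingQuot.mkAlgHom_rel Fq (QSRel.dnComm (n := n) (d := d) i l)
  simpa [qe, qem, map_mul] using h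

lemma q_comm {n d : ℕ} (i j : Fin (n - 1)) :
    (qep i : QSchur n d) * qem j - qem j * qep i
      = if i = j then ∑ l ∈ lamFinset n d, qint (l (loIdx i) - l (hiIdx i)) • qe l
        else 0 := by
  have h := RingQuot.mkAlgHom_rel Fq (QSRel.commutator (n := n) (d := d) i j)
  by_cases hc : i = j
  · subst hc
    simpa [qe, qep, qem, map_sub, map_mul, map_sum, map_smul] using h
  · simpa [qe, qep, qem, hc, map_sub, map_mul] using h

lemma sum_shift (n d k : ℕ) (c : (Fin n → ℤ) → Fq) :
    ∑ l ∈ lamFinset n (d + n * k), c l • (qe (l - fun _ => (k : ℤ)) : QSchur n d)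
      = ∑ m ∈ lamFinset n d, c (m + fun _ => (k : ℤ)) • qe m := by
  rw [← Finset.sum_filter_add_sum_filter_not (lamFinset n (d + n * k))
    (fun l => (l - fun _ => (k : ℤ)) ∈ lamFinset n d)]
  have h2 : ∑ l ∈ (lamFinset n (d + n * k)).filter
      (fun l => ¬ (l - fun _ => (k : ℤ)) ∈ lamFinset n d),
      c l • (qe (l - fun _ => (k : ℤ)) : QSchur n d) = 0 := by
    apply Finset.sum_eq_zero
    intro l hl
    rw [Finset.mem_filter] at hl
    rw [qe_zero hl.2, smul_zero]
  rw [h2, add_zero]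
  refine Finset.sum_bij' (fun l _ => l - fun _ => (k : ℤ))
    (fun m _ => m + fun _ => (k : ℤ)) ?_ ?_ ?_ ?_ ?_
  · intro l hl
    exact (Finset.mem_filter.mp hl).2
  · intro m hm
    rw [Finset.mem_filter]
    have hm' := mem_lamFinset.mp hm
    constructor
    · rw [mem_lamFinset]
      constructor
      · intro j
        have := hm'.1 j
        simp only [Pi.add_apply]
        omega
      · have hsum : ∑ j, (m j + (k : ℤ)) = ∑ j, m j + ∑ _j : Fin n, (k : ℤ) :=
          Finset.sum_add_distrib
        simp only [Pi.add_apply]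
        rw [hsum, hm'.2, Finset.sum_const, Finset.card_univ, Fintype.card_fin]
        push_cast
        ring
    · simpa using hm
  · intro l _; funext j; simp
  · intro m _; funext j; simp
  · intro l _
    have hl : ((l - fun _ => (k : ℤ)) + fun _ => (k : ℤ)) = l := by
      funext j; simp
    rw [hl]

/-- Images of the generators under the projection. -/
noncomputable def genImage (n d k : ℕ) : QGen n → QSchur n d
  | QGen.wt l => qe (l - fun _ : Fin n => (k : ℤ))
  | QGen.up i => qep i
  | QGen.dn i => qem i

/-- For any `k ∈ ℕ`, the assignment `1_λ ↦ 1_{λ - (k,…,k)}` (with `1_μ = 0` when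
`μ ∉ Λ(n,d)`, which holds automatically in the presented algebra) and `E_{±i} ↦ E_{±i}`
defines a well-defined surjective algebra homomorphism `π : Ṡ(n, d+nk) → Ṡ(n,d)`. -/
theorem qSchur_projection (n d k : ℕ) :
    ∃ π : QSchur n (d + n * k) →ₐ[Fq] QSchur n d,
      Function.Surjective π ∧
      (∀ l : Fin n → ℤ, π (qe l) = qe (l - fun _ => (k : ℤ))) ∧
      (∀ i : Fin (n - 1), π (qep i) = qep i) ∧
      (∀ i : Fin (n - 1), π (qem i) = qem i) := by
  classical
  set f : FreeAlgebra Fq (QGen n) →ₐ[Fq] QSchur n d :=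
    FreeAlgebra.lift Fq (genImage n d k) with hf
  have fe : ∀ l : Fin n → ℤ, f (eF l) = qe (l - fun _ => (k : ℤ)) := by
    intro l; simp [hf, eF, FreeAlgebra.lift_ι_apply, genImage]
  have fp : ∀ i : Fin (n - 1), f (epF i) = qep i := by
    intro i; simp [hf, epF, FreeAlgebra.lift_ι_apply, genImage]
  have fm : ∀ i : Fin (n - 1), f (emF i) = qem i := by
    intro i; simp [hf, emF, FreeAlgebra.lift_ι_apply, genImage]
  have key : ∀ ⦃x y⦄, QSRel n (d + n * k) x y → f x = f y := by
    intro x y hxy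
    induction hxy with
    | orth l m =>
      by_cases hc : l = m
      · simp [hc, map_mul, fe, qe_mul]
      · have hne : (l - fun _ => (k : ℤ)) ≠ (m - fun _ => (k : ℤ)) := by
          intro h'
          apply hc
          funext j
          have := congrFun h' j
          simp only [Pi.sub_apply] at this
          omega
        simp [map_mul, fe, qe_mul, hc, hne]
    | unit =>
      rw [map_sum, map_one]
      simp only [fe]
      rw [show (∑ l ∈ lamFinset n (d + n * k), (qe (l - fun _ => (k : ℤ)) : QSchur n d))
          = ∑ l ∈ lamFinset n (d + n * k), (1 : Fq) • qe (l - fun _ => (k : ℤ)) from by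
        simp]
      rw [sum_shift n d k (fun _ => 1)]
      simpa using (qe_sum_one (n := n) (d := d))
    | zero l hl =>
      rw [map_zero, fe]
      apply qe_zero
      intro hmem
      apply hl
      rw [mem_lamFinset] at hmem ⊢
      constructor
      · intro j
        have := hmem.1 j
        simp only [Pi.sub_apply] at this
        omega
      · have hs := hmem.2
        have hd : ∑ j, (l j - (k : ℤ)) = ∑ j, l j - ∑ _j : Fin n, (k : ℤ) :=
          Finset.sum_sub_distrib _ _
        simp only [Pi.sub_apply] at hs
        rw [hd, Finset.sum_const, Finset.card_univ, Fintype.card_fin, nsmul_eq_mul] at hs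
        push_cast at hs ⊢
        linarith
    | upComm i l =>
      have harg : (l + alphaWt i) - (fun _ => (k : ℤ))
          = (l - fun _ => (k : ℤ)) + alphaWt i := by
        funext j; simp only [Pi.sub_apply, Pi.add_apply]; ring
      rw [map_mul, map_mul, fe, fe, fp, harg, qep_qe]
    | dnComm i l =>
      have harg : (l - alphaWt i) - (fun _ => (k : ℤ))
          = (l - fun _ => (k : ℤ)) - alphaWt i := by
        funext j; simp only [Pi.sub_apply]; ring
      rw [map_mul, map_mul, fe, fe, fm, harg, qem_qe]
    | commutator i j =>
      rw [map_sub, map_mul, map_mul, fp, fm, q_comm]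
      by_cases hc : i = j
      · subst hc
        rw [if_pos rfl, if_pos rfl, map_sum]
        simp only [map_smul, fe]
        rw [sum_shift n d k (fun l => qint (l (loIdx i) - l (hiIdx i)))]
        apply Finset.sum_congr rfl
        intro m _
        congr 2
        simp only [Pi.add_apply]
        ring
      · rw [if_neg hc, if_neg hc, map_zero]
  refine ⟨RingQuot.liftAlgHom Fq ⟨f, key⟩, ?_, ?_, ?_, ?_⟩
  · intro x
    obtain ⟨y, rfl⟩ := RingQuot.mkAlgHom_surjective Fq (QSRel n d) x
    induction y using FreeAlgebra.induction with
    | grade0 r =>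
      exact ⟨algebraMap Fq _ r, by simp⟩
    | grade1 g =>
      cases g with
      | wt l =>
        refine ⟨RingQuot.mkAlgHom Fq (QSRel n (d + n * k)) (eF (l + fun _ => (k : ℤ))), ?_⟩
        rw [RingQuot.liftAlgHom_mkAlgHom_apply, fe]
        have hl : (l + fun _ => (k : ℤ)) - (fun _ => (k : ℤ)) = l := by
          funext j; simp
        rw [hl]
        rfl
      | up i =>
        exact ⟨RingQuot.mkAlgHom Fq (QSRel n (d + n * k)) (epF i),
          by rw [RingQuot.liftAlgHom_mkAlgHom_apply, fp]; rfl⟩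
      | dn i =>
        exact ⟨RingQuot.mkAlgHom Fq (QSRel n (d + n * k)) (emF i),
          by rw [RingQuot.liftAlgHom_mkAlgHom_apply, fm]; rfl⟩
    | mul a b ha hb =>
      obtain ⟨xa, hxa⟩ := ha
      obtain ⟨xb, hxb⟩ := hb
      exact ⟨xa * xb, by rw [map_mul, hxa, hxb, ← map_mul]⟩
    | add a b ha hb =>
      obtain ⟨xa, hxa⟩ := ha
      obtain ⟨xb, hxb⟩ := hb
      exact ⟨xa + xb, by rw [map_add, hxa, hxb, ← map_add]⟩
  · intro l
    rw [qe, RingQuot.liftAlgHom_mkAlgHom_apply, fe]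
  · intro i
    rw [qep, RingQuot.liftAlgHom_mkAlgHom_apply, fp]
  · intro i
    rw [qem, RingQuot.liftAlgHom_mkAlgHom_apply, fm]
end
end

section
/- The map τ defined on generators by τ(1_λ) = 1_λ, τ(1_{λ+α_i} E_i 1_λ) = q^{-1-(λ_i - λ_{i+1})} 1_λ E_{-i} 1_{λ+α_i}, and τ(1_λ E_{-i} 1_{λ+α_i}) = q^{1+(λ_i-λ_{i+1})} 1_{λ+α_i} E_i 1_λ extends to a well-defined algebra anti-involution of Ṡ(n,d), i.e. an algebra isomorphism Ṡ(n,d) → Ṡ(n,d)^{op} whose square is the identity. -/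
noncomputable section

namespace QSchurAux

open MulOpposite Finset

variable {n d : ℕ}

def pr {n : ℕ} (i : Fin (n - 1)) (l : Fin n → ℤ) : ℤ := l (loIdx i) - l (hiIdx i)

lemma qv_ne_zero : (qv : Fq) ≠ 0 := RatFunc.X_ne_zero

lemma qe_mul_qe (l m : Fin n → ℤ) :
    (qe l : QSchur n d) * qe m = if l = m then qe l else 0 := by
  have h := RingQuot.mkAlgHom_rel Fq (QSRel.orth (n := n) (d := d) l m)
  simpa [qe, map_mul, apply_ite (RingQuot.mkAlgHom Fq (QSRel n d))] using h

lemma qe_sum : ∑ l ∈ lamFinset n d, (qe l : QSchur n d) = 1 := by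
  have h := RingQuot.mkAlgHom_rel Fq (QSRel.unit (n := n) (d := d))
  simpa [qe, map_sum] using h

lemma qe_notMem {l : Fin n → ℤ} (h : l ∉ lamFinset n d) : (qe l : QSchur n d) = 0 := by
  have h' := RingQuot.mkAlgHom_rel Fq (QSRel.zero (n := n) (d := d) l h)
  simpa [qe] using h'

lemma qep_qe (i : Fin (n - 1)) (l : Fin n → ℤ) :
    (qep i : QSchur n d) * qe l = qe (l + alphaWt i) * qep i := by
  have h := RingQuot.mkAlgHom_rel Fq (QSRel.upComm (n := n) (d := d) i l)
  simpa [qe, qep, map_mul] using h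

lemma qem_qe (i : Fin (n - 1)) (l : Fin n → ℤ) :
    (qem i : QSchur n d) * qe l = qe (l - alphaWt i) * qem i := by
  have h := RingQuot.mkAlgHom_rel Fq (QSRel.dnComm (n := n) (d := d) i l)
  simpa [qe, qem, map_mul] using h

lemma qcomm (i j : Fin (n - 1)) :
    (qep i : QSchur n d) * qem j - qem j * qep i =
      if i = j then ∑ l ∈ lamFinset n d, qint (pr i l) • qe l else 0 := by
  have h := RingQuot.mkAlgHom_rel Fq (QSRel.commutator (n := n) (d := d) i j)
  simpa [qe, qep, qem, pr, map_mul, map_sub, map_sum, map_smul,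
    apply_ite (RingQuot.mkAlgHom Fq (QSRel n d))] using h

end QSchurAux
namespace QSchurAux

lemma qe_mul_qe_self (l : Fin n → ℤ) : (qe l : QSchur n d) * qe l = qe l := by
  simp [qe_mul_qe]

lemma qe_comm (a b : Fin n → ℤ) : (qe a : QSchur n d) * qe b = qe b * qe a := by
  rw [qe_mul_qe, qe_mul_qe]
  by_cases h : a = b
  · subst h; rfl
  · rw [if_neg h, if_neg (Ne.symm h)]

lemma qe_mul_qem (i : Fin (n - 1)) (l : Fin n → ℤ) :
    (qe l : QSchur n d) * qem i = qem i * qe (l + alphaWt i) := by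
  have h := qem_qe (n := n) (d := d) i (l + alphaWt i)
  simpa using h.symm

lemma qe_mul_qep (i : Fin (n - 1)) (l : Fin n → ℤ) :
    (qe (l + alphaWt i) : QSchur n d) * qep i = qep i * qe l := (qep_qe i l).symm

lemma qe_mul_qep' (i : Fin (n - 1)) (l : Fin n → ℤ) :
    (qe l : QSchur n d) * qep i = qep i * qe (l - alphaWt i) := by
  have h := qep_qe (n := n) (d := d) i (l - alphaWt i)
  simpa using h.symm

lemma qv_cancel (p : ℤ) : (qv : Fq) ^ (-1 - p) * qv ^ (1 + p) = 1 := by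
  rw [← zpow_add₀ qv_ne_zero]
  norm_num

lemma qv_cancel' (p : ℤ) : (qv : Fq) ^ (1 + p) * qv ^ (-1 - p) = 1 := by
  rw [← zpow_add₀ qv_ne_zero]
  norm_num

lemma qv_combine (a b : ℤ) : (qv : Fq) ^ a * qv ^ b = qv ^ (a + b) :=
  (zpow_add₀ qv_ne_zero a b).symm

lemma sum_translate {M : Type*} [AddCommMonoid M] {X : Type*} [AddCommGroup X] [DecidableEq X]
    (S : Finset X) (g : X → M) (v : X)
    (h0 : ∀ m, m ∉ S → g m = 0) (h1 : ∀ m ∈ S, m - v ∉ S → g m = 0) :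
    ∑ l ∈ S, g (l + v) = ∑ l ∈ S, g l := by
  have hinj : ∀ x ∈ S, ∀ y ∈ S, x + v = y + v → x = y := fun x _ y _ h => by
    simpa using h
  rw [show (∑ l ∈ S, g (l + v)) = ∑ x ∈ S.image (· + v), g x from
    (Finset.sum_image hinj).symm]
  set T := S.image (· + v) with hT
  have hmem : ∀ x, x ∈ T ↔ x - v ∈ S := by
    intro x
    constructor
    · intro hx
      rcases Finset.mem_image.mp hx with ⟨a, ha, rfl⟩
      simpa using ha
    · intro hx
      exact Finset.mem_image.mpr ⟨x - v, hx, by simp⟩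
  have h₁ : ∑ x ∈ T, g x = ∑ x ∈ T ∩ S, g x := by
    refine (Finset.sum_subset Finset.inter_subset_left ?_).symm
    intro x hx hx'
    exact h0 x fun hxS => hx' (Finset.mem_inter.mpr ⟨hx, hxS⟩)
  have h₂ : ∑ x ∈ S, g x = ∑ x ∈ T ∩ S, g x := by
    refine (Finset.sum_subset Finset.inter_subset_right ?_).symm
    intro x hx hx'
    refine h1 x hx fun hm => hx' (Finset.mem_inter.mpr ⟨(hmem x).mpr hm, hx⟩)
  rw [h₁, h₂]

lemma sum_sum_shift {M : Type*} [AddCommMonoid M] {X : Type*} [DecidableEq X]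
    (S : Finset X) (f : X → X → M) (w : X → X)
    (h : ∀ l ∈ S, ∀ m ∈ S, m ≠ w l → f l m = 0) :
    ∑ l ∈ S, ∑ m ∈ S, f l m = ∑ l ∈ S, if w l ∈ S then f l (w l) else 0 := by
  refine Finset.sum_congr rfl fun l hl => ?_
  by_cases hw : w l ∈ S
  · rw [if_pos hw]
    exact Finset.sum_eq_single_of_mem _ hw fun m hm hne => h l hl m hm hne
  · rw [if_neg hw]
    exact Finset.sum_eq_zero fun m hm => h l hl m hm (by rintro rfl; exact hw hm)

lemma pr_add (i : Fin (n - 1)) (a b : Fin n → ℤ) : pr i (a + b) = pr i a + pr i b := by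
  simp [pr]; ring

lemma pr_sub (i : Fin (n - 1)) (a b : Fin n → ℤ) : pr i (a - b) = pr i a - pr i b := by
  simp [pr]; ring

lemma pr_alpha_self (i : Fin (n - 1)) : pr i (alphaWt (n := n) i) = 2 := by
  simp [pr, alphaWt, loIdx, hiIdx, Fin.ext_iff]

lemma cartan_symm (i j : Fin (n - 1)) :
    pr j (alphaWt (n := n) i) = pr i (alphaWt (n := n) j) := by
  simp only [pr, alphaWt, loIdx, hiIdx, Fin.ext_iff]
  split_ifs <;> omega

end QSchurAux
set_option maxHeartbeats 1000000
namespace QSchurAux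

/-- The image of `E_{+i}` under the anti-involution. -/
noncomputable def EP (n d : ℕ) (i : Fin (n - 1)) : QSchur n d :=
  ∑ l ∈ lamFinset n d, qv ^ (-1 - pr i l) • (qe l * qem i)

/-- The image of `E_{-i}` under the anti-involution. -/
noncomputable def EM (n d : ℕ) (i : Fin (n - 1)) : QSchur n d :=
  ∑ l ∈ lamFinset n d, qv ^ (1 + pr i l) • (qe (l + alphaWt i) * qep i)

lemma qe_mul_EP_eq (i : Fin (n - 1)) (μ : Fin n → ℤ) :
    (qe μ : QSchur n d) * EP n d i = EP n d i * qe (μ + alphaWt i) := by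
  unfold EP
  rw [Finset.mul_sum, Finset.sum_mul]
  refine Finset.sum_congr rfl fun l _ => ?_
  rw [mul_smul_comm, smul_mul_assoc]
  congr 1
  calc qe μ * (qe l * qem i) = qe μ * qe l * qem i := (mul_assoc _ _ _).symm
    _ = qe l * qe μ * qem i := by rw [qe_comm]
    _ = qe l * (qe μ * qem i) := mul_assoc _ _ _
    _ = qe l * (qem i * qe (μ + alphaWt i)) := by rw [qe_mul_qem]
    _ = qe l * qem i * qe (μ + alphaWt i) := (mul_assoc _ _ _).symm

lemma qe_mul_EM_eq (i : Fin (n - 1)) (μ : Fin n → ℤ) :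
    (qe μ : QSchur n d) * EM n d i = EM n d i * qe (μ - alphaWt i) := by
  unfold EM
  rw [Finset.mul_sum, Finset.sum_mul]
  refine Finset.sum_congr rfl fun l _ => ?_
  rw [mul_smul_comm, smul_mul_assoc]
  congr 1
  calc qe μ * (qe (l + alphaWt i) * qep i)
      = qe μ * qe (l + alphaWt i) * qep i := (mul_assoc _ _ _).symm
    _ = qe (l + alphaWt i) * qe μ * qep i := by rw [qe_comm]
    _ = qe (l + alphaWt i) * (qe μ * qep i) := mul_assoc _ _ _
    _ = qe (l + alphaWt i) * (qep i * qe (μ - alphaWt i)) := by rw [qe_mul_qep']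
    _ = qe (l + alphaWt i) * qep i * qe (μ - alphaWt i) := (mul_assoc _ _ _).symm

lemma qe_mul_EP (i : Fin (n - 1)) {μ : Fin n → ℤ} (hμ : μ ∈ lamFinset n d) :
    (qe μ : QSchur n d) * EP n d i = qv ^ (-1 - pr i μ) • (qe μ * qem i) := by
  unfold EP
  rw [Finset.mul_sum]
  have hterm : ∀ l ∈ lamFinset n d,
      (qe μ : QSchur n d) * (qv ^ (-1 - pr i l) • (qe l * qem i)) =
        if μ = l then qv ^ (-1 - pr i l) • (qe μ * qem i) else 0 := by
    intro l _
    rw [mul_smul_comm, ← mul_assoc, qe_mul_qe]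
    split_ifs with h
    · rfl
    · simp
  rw [Finset.sum_congr rfl hterm, Finset.sum_ite_eq, if_pos hμ]

lemma qe_mul_EM (i : Fin (n - 1)) {μ : Fin n → ℤ} (hμ : μ ∈ lamFinset n d) :
    (qe (μ + alphaWt i) : QSchur n d) * EM n d i =
      qv ^ (1 + pr i μ) • (qe (μ + alphaWt i) * qep i) := by
  unfold EM
  rw [Finset.mul_sum]
  have hterm : ∀ l ∈ lamFinset n d,
      (qe (μ + alphaWt i) : QSchur n d) * (qv ^ (1 + pr i l) • (qe (l + alphaWt i) * qep i)) =
        if μ = l then qv ^ (1 + pr i l) • (qe (μ + alphaWt i) * qep i) else 0 := by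
    intro l _
    rw [mul_smul_comm, ← mul_assoc, qe_mul_qe]
    simp only [add_left_inj]
    split_ifs with h
    · rfl
    · simp
  rw [Finset.sum_congr rfl hterm, Finset.sum_ite_eq, if_pos hμ]

end QSchurAux
namespace QSchurAux

lemma cross_elt (i j : Fin (n - 1)) (a b : Fin n → ℤ) :
    ((qe (a + alphaWt j) : QSchur n d) * qep j) * (qe b * qem i) =
      if a = b then qe (a + alphaWt j) * (qep j * qem i) else 0 := by
  rw [mul_assoc (qe (a + alphaWt j)), ← mul_assoc (qep j), qep_qe,
    mul_assoc (qe (b + alphaWt j)), ← mul_assoc (qe (a + alphaWt j)), qe_mul_qe]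
  simp only [add_left_inj]
  split_ifs with h
  · rfl
  · exact zero_mul _

lemma cross_elt' (i j : Fin (n - 1)) (l m : Fin n → ℤ) :
    ((qe l : QSchur n d) * qem i) * (qe (m + alphaWt j) * qep j) =
      if m = l + alphaWt i - alphaWt j then qe l * (qem i * qep j) else 0 := by
  rw [mul_assoc (qe l), ← mul_assoc (qem i), qem_qe,
    mul_assoc (qe (m + alphaWt j - alphaWt i)), ← mul_assoc (qe l), qe_mul_qe]
  have hc : (l = m + alphaWt j - alphaWt i) ↔ (m = l + alphaWt i - alphaWt j) := by
    constructor <;> intro h <;> subst h <;> abel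
  rw [if_congr hc rfl rfl]
  split_ifs with h
  · rfl
  · exact zero_mul _

lemma EM_mul_EP (i j : Fin (n - 1)) :
    (EM n d j : QSchur n d) * EP n d i =
      ∑ l ∈ lamFinset n d,
        qv ^ (pr j l - pr i l) • (qe (l + alphaWt j) * (qep j * qem i)) := by
  unfold EM EP
  rw [Finset.sum_mul_sum]
  rw [sum_sum_shift (w := fun l => l) _ _ ?hz]
  case hz =>
    intro a _ b _ hne
    rw [smul_mul_smul_comm, cross_elt, if_neg (fun h => hne h.symm), smul_zero]
  refine Finset.sum_congr rfl fun l hl => ?_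
  rw [if_pos hl, smul_mul_smul_comm, cross_elt, if_pos rfl, qv_combine,
    show (1 + pr j l) + (-1 - pr i l) = pr j l - pr i l from by ring]

lemma EP_mul_EM (i j : Fin (n - 1)) :
    (EP n d i : QSchur n d) * EM n d j =
      ∑ l ∈ lamFinset n d,
        if l + alphaWt i - alphaWt j ∈ lamFinset n d
        then (qv ^ (-1 - pr i l) * qv ^ (1 + pr j (l + alphaWt i - alphaWt j))) •
          (qe l * (qem i * qep j))
        else 0 := by
  unfold EP EM
  rw [Finset.sum_mul_sum]
  rw [sum_sum_shift (w := fun l => l + alphaWt i - alphaWt j) _ _ ?hz]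
  case hz =>
    intro a _ b _ hne
    rw [smul_mul_smul_comm, cross_elt', if_neg hne, smul_zero]
  refine Finset.sum_congr rfl fun l hl => ?_
  by_cases hc : l + alphaWt i - alphaWt j ∈ lamFinset n d
  · rw [if_pos hc, if_pos hc, smul_mul_smul_comm, cross_elt', if_pos rfl]
  · rw [if_neg hc, if_neg hc]

lemma qe_mul_C (i : Fin (n - 1)) (ν : Fin n → ℤ) :
    (qe ν : QSchur n d) * (∑ μ ∈ lamFinset n d, qint (pr i μ) • qe μ) =
      qint (pr i ν) • qe ν := by
  rw [Finset.mul_sum]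
  have hterm : ∀ μ ∈ lamFinset n d,
      (qe ν : QSchur n d) * (qint (pr i μ) • qe μ) =
        if ν = μ then qint (pr i μ) • qe ν else 0 := by
    intro μ _
    rw [mul_smul_comm, qe_mul_qe]
    split_ifs with h
    · rfl
    · exact smul_zero _
  rw [Finset.sum_congr rfl hterm, Finset.sum_ite_eq]
  by_cases hν : ν ∈ lamFinset n d
  · rw [if_pos hν]
  · rw [if_neg hν, qe_notMem hν, smul_zero]

lemma sum_translate' {M : Type*} [AddCommMonoid M] {X : Type*} [AddCommGroup X] [DecidableEq X]
    (S : Finset X) (g : X → M) (v : X)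
    (h0 : ∀ m, m ∉ S → g m = 0) (h1 : ∀ m ∈ S, m + v ∉ S → g m = 0) :
    ∑ l ∈ S, g (l - v) = ∑ l ∈ S, g l := by
  have h := sum_translate S g (-v) h0 (by simpa using h1)
  simpa [sub_eq_add_neg] using h

end QSchurAux
namespace QSchurAux

lemma qkey (i j : Fin (n - 1)) :
    (EM n d j : QSchur n d) * EP n d i - EP n d i * EM n d j =
      if i = j then ∑ l ∈ lamFinset n d, qint (pr i l) • qe l else 0 := by
  rw [EM_mul_EP, EP_mul_EM]
  by_cases hij : i = j
  · subst hij
    rw [if_pos rfl]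
    have hB : (∑ l ∈ lamFinset n d,
        if l + alphaWt i - alphaWt i ∈ lamFinset n d
        then (qv ^ (-1 - pr i l) * qv ^ (1 + pr i (l + alphaWt i - alphaWt i))) •
          ((qe l : QSchur n d) * (qem i * qep i))
        else 0) = ∑ l ∈ lamFinset n d, (qe l : QSchur n d) * (qem i * qep i) := by
      refine Finset.sum_congr rfl fun l hl => ?_
      rw [add_sub_cancel_right, if_pos hl, qv_cancel (pr i l), one_smul]
    rw [hB]
    have hA : (∑ l ∈ lamFinset n d,
        qv ^ (pr i l - pr i l) • ((qe (l + alphaWt i) : QSchur n d) * (qep i * qem i)))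
        = ∑ l ∈ lamFinset n d, (qe (l + alphaWt i) : QSchur n d) * (qep i * qem i) := by
      refine Finset.sum_congr rfl fun l _ => ?_
      rw [sub_self, zpow_zero, one_smul]
    rw [hA]
    have hPM : (qem i : QSchur n d) * qep i =
        qep i * qem i - ∑ μ ∈ lamFinset n d, qint (pr i μ) • qe μ := by
      have h := qcomm (n := n) (d := d) i i
      rw [if_pos rfl] at h
      rw [← h]
      abel
    have hsplit : ∑ l ∈ lamFinset n d, (qe l : QSchur n d) * (qem i * qep i)
        = ∑ l ∈ lamFinset n d, (qe l : QSchur n d) * (qep i * qem i)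
          - ∑ l ∈ lamFinset n d, qint (pr i l) • (qe l : QSchur n d) := by
      rw [← Finset.sum_sub_distrib]
      exact Finset.sum_congr rfl fun l _ => by rw [hPM, mul_sub, qe_mul_C]
    rw [hsplit]
    have htrans : ∑ l ∈ lamFinset n d, (qe (l + alphaWt i) : QSchur n d) * (qep i * qem i)
        = ∑ l ∈ lamFinset n d, (qe l : QSchur n d) * (qep i * qem i) := by
      refine sum_translate _ (fun ν => (qe ν : QSchur n d) * (qep i * qem i)) (alphaWt i) ?_ ?_
      · intro m hm
        show (qe m : QSchur n d) * (qep i * qem i) = 0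
        rw [qe_notMem hm, zero_mul]
      · intro m _ hm'
        show (qe m : QSchur n d) * (qep i * qem i) = 0
        rw [← mul_assoc, qe_mul_qep', qe_notMem hm', mul_zero, zero_mul]
    rw [htrans]
    abel
  · rw [if_neg hij, sub_eq_zero]
    have hMP : (qem i : QSchur n d) * qep j = qep j * qem i := by
      have h := qcomm (n := n) (d := d) j i
      rw [if_neg (fun h' => hij h'.symm)] at h
      exact (sub_eq_zero.mp h).symm
    have hgoal : ∀ l : Fin n → ℤ,
        (if l + alphaWt i - alphaWt j ∈ lamFinset n d
         then (qv ^ (-1 - pr i l) * qv ^ (1 + pr j (l + alphaWt i - alphaWt j))) •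
           ((qe l : QSchur n d) * (qem i * qep j))
         else 0)
        = qv ^ (pr j (l - alphaWt j) - pr i (l - alphaWt j)) •
            ((qe (l - alphaWt j + alphaWt j) : QSchur n d) * (qep j * qem i)) := by
      intro l
      rw [sub_add_cancel]
      by_cases hc : l + alphaWt i - alphaWt j ∈ lamFinset n d
      · have he : (-1 - pr i l) + (1 + pr j (l + alphaWt i - alphaWt j))
            = pr j (l - alphaWt j) - pr i (l - alphaWt j) := by
          simp only [pr_add, pr_sub, pr_alpha_self]
          rw [cartan_symm i j]
          ring
        rw [if_pos hc, hMP, qv_combine, he]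
      · rw [if_neg hc]
        have hz : (qe l : QSchur n d) * (qep j * qem i) = 0 := by
          rw [← mul_assoc, qe_mul_qep', mul_assoc, qe_mul_qem, ← mul_assoc,
            sub_add_eq_add_sub, qe_notMem hc]
          simp
        rw [hz, smul_zero]
    rw [show (∑ l ∈ lamFinset n d,
        if l + alphaWt i - alphaWt j ∈ lamFinset n d
        then (qv ^ (-1 - pr i l) * qv ^ (1 + pr j (l + alphaWt i - alphaWt j))) •
          ((qe l : QSchur n d) * (qem i * qep j))
        else 0)
        = ∑ l ∈ lamFinset n d, qv ^ (pr j (l - alphaWt j) - pr i (l - alphaWt j)) •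
            ((qe (l - alphaWt j + alphaWt j) : QSchur n d) * (qep j * qem i))
      from Finset.sum_congr rfl fun l _ => hgoal l]
    refine (sum_translate' _
      (fun ν => qv ^ (pr j ν - pr i ν) • ((qe (ν + alphaWt j) : QSchur n d) * (qep j * qem i)))
      (alphaWt j) ?_ ?_).symm
    · intro m hm
      show qv ^ (pr j m - pr i m) • ((qe (m + alphaWt j) : QSchur n d) * (qep j * qem i)) = 0
      rw [← mul_assoc, qe_mul_qep, mul_assoc, qe_notMem hm]
      simp
    · intro m _ hm'
      show qv ^ (pr j m - pr i m) • ((qe (m + alphaWt j) : QSchur n d) * (qep j * qem i)) = 0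
      rw [qe_notMem hm', zero_mul, smul_zero]

end QSchurAux
namespace QSchurAux

open MulOpposite

/-- Images of the generators under the anti-involution. -/
noncomputable def genMap (n d : ℕ) : QGen n → (QSchur n d)ᵐᵒᵖ
  | .wt l => op (qe l)
  | .up i => op (EP n d i)
  | .dn i => op (EM n d i)

/-- The anti-involution on the free algebra. -/
noncomputable def Tfree (n d : ℕ) : FreeAlgebra Fq (QGen n) →ₐ[Fq] (QSchur n d)ᵐᵒᵖ :=
  FreeAlgebra.lift Fq (genMap n d)

lemma Tfree_eF (l : Fin n → ℤ) : Tfree n d (eF l) = op (qe l) := by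
  rw [Tfree, eF, FreeAlgebra.lift_ι_apply]; rfl

lemma Tfree_epF (i : Fin (n - 1)) : Tfree n d (epF i) = op (EP n d i) := by
  rw [Tfree, epF, FreeAlgebra.lift_ι_apply]; rfl

lemma Tfree_emF (i : Fin (n - 1)) : Tfree n d (emF i) = op (EM n d i) := by
  rw [Tfree, emF, FreeAlgebra.lift_ι_apply]; rfl

lemma Tfree_rel : ∀ ⦃x y : FreeAlgebra Fq (QGen n)⦄, QSRel n d x y → Tfree n d x = Tfree n d y := by
  intro x y h
  induction h with
  | orth l m =>
      rw [map_mul, Tfree_eF, Tfree_eF, ← op_mul, qe_mul_qe]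
      by_cases h : l = m
      · subst h
        simp [Tfree_eF]
      · rw [if_neg (Ne.symm h), if_neg h, map_zero, op_zero]
  | unit =>
      rw [map_sum, map_one]
      have : ∀ l ∈ lamFinset n d, Tfree n d (eF l) = op (qe l) := fun l _ => Tfree_eF l
      rw [Finset.sum_congr rfl this, ← Finset.op_sum, qe_sum, op_one]
  | zero l h =>
      rw [Tfree_eF, map_zero, qe_notMem h, op_zero]
  | upComm i l =>
      rw [map_mul, map_mul, Tfree_eF, Tfree_eF, Tfree_epF, ← op_mul, ← op_mul, qe_mul_EP_eq]
  | dnComm i l =>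
      rw [map_mul, map_mul, Tfree_eF, Tfree_eF, Tfree_emF, ← op_mul, ← op_mul, qe_mul_EM_eq]
  | commutator i j =>
      rw [map_sub, map_mul, map_mul, Tfree_epF, Tfree_emF, ← op_mul, ← op_mul, ← op_sub,
        qkey]
      by_cases h : i = j
      · subst h
        rw [if_pos rfl, if_pos rfl, map_sum, Finset.op_sum]
        refine Finset.sum_congr rfl fun l _ => ?_
        rw [map_smul, Tfree_eF, op_smul, pr]
      · rw [if_neg h, if_neg h, map_zero, op_zero]

/-- The anti-involution, as an algebra morphism to the opposite algebra. -/
noncomputable def T (n d : ℕ) : QSchur n d →ₐ[Fq] (QSchur n d)ᵐᵒᵖ :=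
  RingQuot.liftAlgHom Fq ⟨Tfree n d, Tfree_rel⟩

lemma T_qe (l : Fin n → ℤ) : T n d (qe l) = op (qe l) := by
  rw [qe, T, RingQuot.liftAlgHom_mkAlgHom_apply, Tfree_eF, qe]

lemma T_qep (i : Fin (n - 1)) : T n d (qep i) = op (EP n d i) := by
  rw [qep, T, RingQuot.liftAlgHom_mkAlgHom_apply, Tfree_epF]

lemma T_qem (i : Fin (n - 1)) : T n d (qem i) = op (EM n d i) := by
  rw [qem, T, RingQuot.liftAlgHom_mkAlgHom_apply, Tfree_emF]

lemma T_EP (i : Fin (n - 1)) : T n d (EP n d i) = op (qep i) := by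
  unfold EP
  rw [map_sum]
  have hterm : ∀ l ∈ lamFinset n d,
      T n d (qv ^ (-1 - pr i l) • (qe l * qem i)) = op ((qep i : QSchur n d) * qe l) := by
    intro l hl
    rw [map_smul, map_mul, T_qe, T_qem, ← op_mul]
    have h1 : (EM n d i : QSchur n d) * qe l = qv ^ (1 + pr i l) • (qe (l + alphaWt i) * qep i) := by
      have h2 := qe_mul_EM_eq (n := n) (d := d) i (l + alphaWt i)
      rw [add_sub_cancel_right] at h2
      rw [← h2, qe_mul_EM i hl]
    rw [h1, op_smul, smul_smul, qv_cancel, one_smul, qe_mul_qep]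
  rw [Finset.sum_congr rfl hterm, ← Finset.op_sum, ← Finset.mul_sum, qe_sum, mul_one]

lemma T_EM (i : Fin (n - 1)) : T n d (EM n d i) = op (qem i) := by
  unfold EM
  rw [map_sum]
  have hterm : ∀ l ∈ lamFinset n d,
      T n d (qv ^ (1 + pr i l) • (qe (l + alphaWt i) * qep i)) =
        op ((qem i : QSchur n d) * qe (l + alphaWt i)) := by
    intro l hl
    rw [map_smul, map_mul, T_qe, T_qep, ← op_mul]
    have h1 : (EP n d i : QSchur n d) * qe (l + alphaWt i) =
        qv ^ (-1 - pr i l) • (qe l * qem i) := by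
      rw [← qe_mul_EP_eq, qe_mul_EP i hl]
    rw [h1, op_smul, smul_smul, qv_cancel', one_smul]
    rw [show (qe l : QSchur n d) * qem i = qem i * qe (l + alphaWt i) from qe_mul_qem i l]
  rw [Finset.sum_congr rfl hterm, ← Finset.op_sum]
  have htrans : ∑ l ∈ lamFinset n d, ((qem i : QSchur n d) * qe (l + alphaWt i)) =
      ∑ l ∈ lamFinset n d, (qem i : QSchur n d) * qe l := by
    refine sum_translate _ (fun ν => (qem i : QSchur n d) * qe ν) (alphaWt i) ?_ ?_
    · intro m hm
      show (qem i : QSchur n d) * qe m = 0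
      rw [qe_notMem hm, mul_zero]
    · intro m _ hm'
      show (qem i : QSchur n d) * qe m = 0
      rw [qem_qe, qe_notMem hm', zero_mul]
  rw [htrans, ← Finset.mul_sum, qe_sum, mul_one]

end QSchurAux
namespace QSchurAux

open MulOpposite

/-- The inverse of the anti-involution. -/
noncomputable def Sg (n d : ℕ) : (QSchur n d)ᵐᵒᵖ →ₐ[Fq] QSchur n d where
  toFun y := (T n d y.unop).unop
  map_one' := by simp
  map_mul' x y := by simp
  map_zero' := by simp
  map_add' x y := by simp
  commutes' r := by simp [Algebra.algebraMap_eq_smul_one]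

lemma Sg_apply (y : (QSchur n d)ᵐᵒᵖ) : Sg n d y = (T n d y.unop).unop := rfl

lemma Sg_comp_T : (Sg n d).comp (T n d) = AlgHom.id Fq (QSchur n d) := by
  refine RingQuot.ringQuot_ext' Fq _ _ ?_
  refine FreeAlgebra.hom_ext ?_
  funext g
  show ((Sg n d).comp (T n d)) ((RingQuot.mkAlgHom Fq (QSRel n d)) (FreeAlgebra.ι Fq g))
      = (RingQuot.mkAlgHom Fq (QSRel n d)) (FreeAlgebra.ι Fq g)
  cases g with
  | wt l =>
      show Sg n d (T n d (qe l)) = qe l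
      rw [T_qe, Sg_apply, unop_op, T_qe, unop_op]
  | up i =>
      show Sg n d (T n d (qep i)) = qep i
      rw [T_qep, Sg_apply, unop_op, T_EP, unop_op]
  | dn i =>
      show Sg n d (T n d (qem i)) = qem i
      rw [T_qem, Sg_apply, unop_op, T_EM, unop_op]

lemma Sg_T_apply (x : QSchur n d) : Sg n d (T n d x) = x :=
  AlgHom.congr_fun Sg_comp_T x

lemma T_T_apply (x : QSchur n d) : (T n d ((T n d x).unop)).unop = x :=
  Sg_T_apply x

lemma T_comp_Sg : (T n d).comp (Sg n d) = AlgHom.id Fq ((QSchur n d)ᵐᵒᵖ) := by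
  refine AlgHom.ext fun y => ?_
  show T n d ((T n d y.unop).unop) = y
  have h := T_T_apply (n := n) (d := d) y.unop
  exact unop_injective h

/-- The anti-involution as an algebra isomorphism onto the opposite algebra. -/
noncomputable def tau (n d : ℕ) : QSchur n d ≃ₐ[Fq] (QSchur n d)ᵐᵒᵖ :=
  AlgEquiv.ofAlgHom (T n d) (Sg n d) T_comp_Sg Sg_comp_T

lemma tau_apply (x : QSchur n d) : tau n d x = T n d x := rfl

lemma contract_EP (i : Fin (n - 1)) (l : Fin n → ℤ) :
    (qe l : QSchur n d) * (EP n d i * qe (l + alphaWt i)) =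
      qv ^ (-1 - pr i l) • (qe l * qem i * qe (l + alphaWt i)) := by
  have hqem : (qem i : QSchur n d) * qe (l + alphaWt i) = qe l * qem i := by
    have h := qem_qe (n := n) (d := d) i (l + alphaWt i)
    rwa [add_sub_cancel_right] at h
  by_cases hl : l ∈ lamFinset n d
  · rw [← qe_mul_EP_eq, ← mul_assoc, qe_mul_qe_self, qe_mul_EP i hl]
    congr 1
    rw [mul_assoc, hqem, ← mul_assoc, qe_mul_qe_self]
  · rw [qe_notMem hl, zero_mul, zero_mul, zero_mul, smul_zero]

lemma contract_EM (i : Fin (n - 1)) (l : Fin n → ℤ) :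
    (qe (l + alphaWt i) : QSchur n d) * (EM n d i * qe l) =
      qv ^ (1 + pr i l) • (qe (l + alphaWt i) * qep i * qe l) := by
  have hEM : (EM n d i : QSchur n d) * qe l = qe (l + alphaWt i) * EM n d i := by
    have h := qe_mul_EM_eq (n := n) (d := d) i (l + alphaWt i)
    rw [add_sub_cancel_right] at h
    exact h.symm
  by_cases hl : l ∈ lamFinset n d
  · rw [hEM, ← mul_assoc, qe_mul_qe_self, qe_mul_EM i hl]
    congr 1
    rw [mul_assoc, show (qep i : QSchur n d) * qe l = qe (l + alphaWt i) * qep i from qep_qe i l,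
      ← mul_assoc, qe_mul_qe_self]
  · rw [qe_notMem hl, mul_zero, mul_zero, mul_zero, smul_zero]

end QSchurAux

open QSchurAux

/-- The map `τ` with `τ(1_λ) = 1_λ`,
`τ(1_{λ+α_i} E_i 1_λ) = q^{-1-(λ_i - λ_{i+1})} 1_λ E_{-i} 1_{λ+α_i}` and
`τ(1_λ E_{-i} 1_{λ+α_i}) = q^{1+(λ_i-λ_{i+1})} 1_{λ+α_i} E_i 1_λ` extends to a
well-defined algebra anti-involution of `Ṡ(n,d)`: an algebra isomorphism
`Ṡ(n,d) ≃ Ṡ(n,d)ᵒᵖ` whose square is the identity. -/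
theorem qSchur_anti_involution (n d : ℕ) :
    ∃ τ : QSchur n d ≃ₐ[Fq] (QSchur n d)ᵐᵒᵖ,
      (∀ l : Fin n → ℤ, τ (qe l) = MulOpposite.op (qe l)) ∧
      (∀ (i : Fin (n - 1)) (l : Fin n → ℤ),
        τ (qe (l + alphaWt i) * qep i * qe l) =
          MulOpposite.op
            ((qv ^ (-1 - (l (loIdx i) - l (hiIdx i)))) •
              (qe l * qem i * qe (l + alphaWt i)))) ∧
      (∀ (i : Fin (n - 1)) (l : Fin n → ℤ),
        τ (qe l * qem i * qe (l + alphaWt i)) =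
          MulOpposite.op
            ((qv ^ (1 + (l (loIdx i) - l (hiIdx i)))) •
              (qe (l + alphaWt i) * qep i * qe l))) ∧
      (∀ x : QSchur n d, (τ ((τ x).unop)).unop = x) := by
  refine ⟨tau n d, fun l => T_qe l, fun i l => ?_, fun i l => ?_, fun x => T_T_apply x⟩
  · rw [tau_apply, map_mul, map_mul, T_qe, T_qe, T_qep, ← MulOpposite.op_mul,
      ← MulOpposite.op_mul, contract_EP]
    rfl
  · rw [tau_apply, map_mul, map_mul, T_qe, T_qe, T_qem, ← MulOpposite.op_mul,
      ← MulOpposite.op_mul, contract_EM]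
    rfl
end
end

section
/- The supersymmetric Schur polynomial π_α(x,y) = det(e_{α_i + j - i}(x,y))_{1 ≤ i,j ≤ m} vanishes whenever the partition α of length m does not lie in Γ(a,b), i.e. whenever α_j > b for some j > a. -/
open MvPolynomial

noncomputable section

/-- `e_k(x,y)` for an integer index `k`, with `e_k(x,y) = 0` for `k < 0`. -/
noncomputable def superEInt (a b : ℕ) (k : ℤ) : MvPolynomial (Fin a ⊕ Fin b) ℚ :=
  if k < 0 then 0 else superElem a b k.toNat

/-- The supersymmetric Schur polynomial
`π_α(x,y) = det(e_{α_i + j - i}(x,y))_{1 ≤ i,j ≤ m}`. -/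
noncomputable def supSchur (a b m : ℕ) (α : Fin m → ℕ) : MvPolynomial (Fin a ⊕ Fin b) ℚ :=
  Matrix.det (Matrix.of fun i j : Fin m =>
    superEInt a b ((α i : ℤ) + (j : ℤ) - (i : ℤ)))

variable (a : ℕ)

abbrev P (a : ℕ) := MvPolynomial (Fin a) ℚ

/-- multisets of card k over Fin a, as a Finset -/
def Msets (a k : ℕ) : Finset (Multiset (Fin a)) :=
  (Finset.univ : Finset (Sym (Fin a) k)).image Sym.toMultiset

lemma mem_Msets {a k : ℕ} (m : Multiset (Fin a)) : m ∈ Msets a k ↔ Multiset.card m = k := by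
  constructor
  · rintro hm
    simp only [Msets, Finset.mem_image] at hm
    obtain ⟨s, -, rfl⟩ := hm
    exact s.2
  · intro hm
    simp only [Msets, Finset.mem_image]
    exact ⟨⟨m, hm⟩, Finset.mem_univ _, rfl⟩

lemma hsymm_eq_sum (k : ℕ) : hsymm (Fin a) ℚ k = ∑ m ∈ Msets a k, (m.map X).prod := by
  rw [Msets, Finset.sum_image]
  · rfl
  · intro s _ t _ h
    exact Subtype.ext h

def J (a n : ℕ) : Finset (Finset (Fin a) × Multiset (Fin a)) :=
  (Finset.range (n+1)).biUnion (fun r => (Finset.univ.powersetCard r) ×ˢ Msets a (n - r))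

lemma mem_J {a n : ℕ} (p : Finset (Fin a) × Multiset (Fin a)) :
    p ∈ J a n ↔ p.1.card + Multiset.card p.2 = n := by
  simp only [J, Finset.mem_biUnion, Finset.mem_range, Finset.mem_product,
    Finset.mem_powersetCard_univ, mem_Msets]
  constructor
  · rintro ⟨r, hr, h1, h2⟩
    omega
  · intro hp
    exact ⟨p.1.card, by omega, rfl, by omega⟩

def wt (a : ℕ) (p : Finset (Fin a) × Multiset (Fin a)) : P a :=
  (-1) ^ p.1.card * (∏ i ∈ p.1, X i) * (p.2.map X).prod

lemma lhs_eq_sum_J (n : ℕ) :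
    ∑ r ∈ Finset.range (n+1),
      (-1 : P a)^r * esymm (Fin a) ℚ r * hsymm (Fin a) ℚ (n-r)
    = ∑ p ∈ J a n, wt a p := by
  rw [J, Finset.sum_biUnion]
  · apply Finset.sum_congr rfl
    intro r _
    rw [Finset.sum_product]
    simp only [esymm, Finset.mul_sum, Finset.sum_mul]
    apply Finset.sum_congr rfl
    intro S hS
    rw [Finset.mem_powersetCard_univ] at hS
    rw [hsymm_eq_sum, Finset.mul_sum]
    apply Finset.sum_congr rfl
    intro m _
    rw [wt, hS]
  · intro r hr s hs hrs
    apply Finset.disjoint_left.mpr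
    rintro ⟨S, m⟩ h1 h2
    rw [Finset.mem_product, Finset.mem_powersetCard_univ] at h1 h2
    exact hrs (h1.1 ▸ h2.1)

def gmap (a : ℕ) (p : Finset (Fin a) × Multiset (Fin a)) : Finset (Fin a) × Multiset (Fin a) :=
  if h : (p.1 ∪ p.2.toFinset).Nonempty then
    (if (p.1 ∪ p.2.toFinset).max' h ∈ p.1
      then (p.1.erase ((p.1 ∪ p.2.toFinset).max' h), ((p.1 ∪ p.2.toFinset).max' h) ::ₘ p.2)
      else (insert ((p.1 ∪ p.2.toFinset).max' h) p.1, p.2.erase ((p.1 ∪ p.2.toFinset).max' h)))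
  else p

lemma union_nonempty {a n : ℕ} (hn : n ≠ 0) {p : Finset (Fin a) × Multiset (Fin a)}
    (hp : p ∈ J a n) : (p.1 ∪ p.2.toFinset).Nonempty := by
  rw [mem_J] at hp
  rcases p.1.eq_empty_or_nonempty with h | h
  · refine Finset.Nonempty.mono Finset.subset_union_right ?_
    rw [Finset.nonempty_iff_ne_empty]
    intro hc
    rw [h] at hp
    simp only [Finset.card_empty, zero_add] at hp
    have : p.2 = 0 := by
      rwa [← Multiset.toFinset_eq_empty]
    rw [this] at hp
    simp at hp
    exact hn hp.symm
  · exact Finset.Nonempty.mono Finset.subset_union_left h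

lemma gmap_union {a : ℕ} (p : Finset (Fin a) × Multiset (Fin a))
    (h : (p.1 ∪ p.2.toFinset).Nonempty) :
    (gmap a p).1 ∪ (gmap a p).2.toFinset = p.1 ∪ p.2.toFinset := by
  rw [gmap, dif_pos h]
  set i := (p.1 ∪ p.2.toFinset).max' h with hi
  by_cases hmem : i ∈ p.1
  · rw [if_pos hmem]
    ext x
    simp only [Finset.mem_union, Finset.mem_erase, Multiset.toFinset_cons, Finset.mem_insert,
      Multiset.mem_toFinset]
    by_cases hx : x = i
    · subst hx; tauto
    · tauto
  · rw [if_neg hmem]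
    have him : i ∈ p.2 := by
      have := (p.1 ∪ p.2.toFinset).max'_mem h
      rw [← hi, Finset.mem_union, Multiset.mem_toFinset] at this
      tauto
    ext x
    simp only [Finset.mem_union, Finset.mem_insert, Multiset.mem_toFinset]
    by_cases hx : x = i
    · subst hx; tauto
    · rw [Multiset.mem_erase_of_ne hx]
      tauto

lemma gmap_mem {a n : ℕ} (hn : n ≠ 0) {p : Finset (Fin a) × Multiset (Fin a)}
    (hp : p ∈ J a n) : gmap a p ∈ J a n := by
  have h := union_nonempty hn hp
  rw [mem_J] at hp ⊢
  rw [gmap, dif_pos h]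
  set i := (p.1 ∪ p.2.toFinset).max' h with hi
  by_cases hmem : i ∈ p.1
  · rw [if_pos hmem]
    have h1 : 1 ≤ p.1.card := Finset.card_pos.mpr ⟨i, hmem⟩
    simp only [Finset.card_erase_of_mem hmem, Multiset.card_cons]
    omega
  · rw [if_neg hmem]
    have him : i ∈ p.2 := by
      have := (p.1 ∪ p.2.toFinset).max'_mem h
      rw [← hi, Finset.mem_union, Multiset.mem_toFinset] at this
      tauto
    have h2 : 1 ≤ Multiset.card p.2 := Multiset.card_pos.mpr (by intro h0; rw [h0] at him; simp at him)
    simp only [Finset.card_insert_of_notMem hmem, Multiset.card_erase_of_mem him,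
      Nat.pred_eq_sub_one]
    omega

lemma gmap_gmap {a n : ℕ} (hn : n ≠ 0) {p : Finset (Fin a) × Multiset (Fin a)}
    (hp : p ∈ J a n) : gmap a (gmap a p) = p := by
  have h := union_nonempty hn hp
  have hu := gmap_union p h
  have h' : ((gmap a p).1 ∪ (gmap a p).2.toFinset).Nonempty := by rw [hu]; exact h
  set i := (p.1 ∪ p.2.toFinset).max' h with hi
  have hmax : ((gmap a p).1 ∪ (gmap a p).2.toFinset).max' h' = i := by
    simp_rw [hi, hu]
  conv_lhs => rw [gmap]
  rw [dif_pos h', hmax]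
  rw [gmap, dif_pos h, ← hi]
  by_cases hmem : i ∈ p.1
  · rw [if_pos hmem]
    have : i ∉ (p.1.erase i, i ::ₘ p.2).1 := Finset.notMem_erase i p.1
    rw [if_neg this]
    simp only
    rw [Finset.insert_erase hmem, Multiset.erase_cons_head]
  · rw [if_neg hmem]
    have him : i ∈ p.2 := by
      have := (p.1 ∪ p.2.toFinset).max'_mem h
      rw [← hi, Finset.mem_union, Multiset.mem_toFinset] at this
      tauto
    have : i ∈ (insert i p.1, p.2.erase i).1 := Finset.mem_insert_self i p.1
    rw [if_pos this]
    simp only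
    rw [Finset.erase_insert hmem, Multiset.cons_erase him]

lemma gmap_ne {a n : ℕ} (hn : n ≠ 0) {p : Finset (Fin a) × Multiset (Fin a)}
    (hp : p ∈ J a n) : gmap a p ≠ p := by
  have h := union_nonempty hn hp
  rw [gmap, dif_pos h]
  set i := (p.1 ∪ p.2.toFinset).max' h with hi
  by_cases hmem : i ∈ p.1
  · rw [if_pos hmem]
    intro hc
    have := congrArg Prod.fst hc
    simp only at this
    rw [Finset.erase_eq_self] at this
    exact this hmem
  · rw [if_neg hmem]
    intro hc
    have := congrArg Prod.fst hc
    simp only at this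
    rw [Finset.insert_eq_self] at this
    exact hmem this

lemma wt_cancel {a n : ℕ} (hn : n ≠ 0) {p : Finset (Fin a) × Multiset (Fin a)}
    (hp : p ∈ J a n) : wt a p + wt a (gmap a p) = 0 := by
  have h := union_nonempty hn hp
  rw [gmap, dif_pos h]
  set i := (p.1 ∪ p.2.toFinset).max' h with hi
  by_cases hmem : i ∈ p.1
  · rw [if_pos hmem]
    simp only [wt, Multiset.map_cons, Multiset.prod_cons,
      Finset.card_erase_of_mem hmem]
    have h1 : 1 ≤ p.1.card := Finset.card_pos.mpr ⟨i, hmem⟩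
    have hprod : ∏ j ∈ p.1, X j = X i * ∏ j ∈ p.1.erase i, (X j : P a) :=
      (Finset.mul_prod_erase p.1 X hmem).symm
    rw [hprod]
    have hsign : (-1 : P a) ^ p.1.card = -(-1) ^ (p.1.card - 1) := by
      have : p.1.card = (p.1.card - 1) + 1 := by omega
      rw [this]
      ring_nf
      simp [pow_succ]
    rw [hsign]
    ring
  · rw [if_neg hmem]
    have him : i ∈ p.2 := by
      have := (p.1 ∪ p.2.toFinset).max'_mem h
      rw [← hi, Finset.mem_union, Multiset.mem_toFinset] at this
      tauto
    simp only [wt, Finset.card_insert_of_notMem hmem]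
    rw [Finset.prod_insert hmem]
    have hm : (p.2.map X).prod = (X i : P a) * ((p.2.erase i).map X).prod := by
      conv_lhs => rw [← Multiset.cons_erase him]
      rw [Multiset.map_cons, Multiset.prod_cons]
    rw [hm, pow_succ]
    ring

lemma lemmaA (a n : ℕ) (hn : n ≠ 0) :
    ∑ r ∈ Finset.range (n+1),
      (-1 : P a)^r * esymm (Fin a) ℚ r * hsymm (Fin a) ℚ (n-r) = 0 := by
  rw [lhs_eq_sum_J]
  exact Finset.sum_involution (fun p _ => gmap a p)
    (fun p hp => wt_cancel hn hp)
    (fun p hp _ => gmap_ne hn hp)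
    (fun p hp => gmap_mem hn hp)
    (fun p hp => gmap_gmap hn hp)

lemma lemmaA' (a n : ℕ) :
    ∑ r ∈ Finset.range (n+1),
      (-1 : P a)^r * esymm (Fin a) ℚ r * hsymm (Fin a) ℚ (n-r)
    = if n = 0 then 1 else 0 := by
  rcases eq_or_ne n 0 with rfl | hn
  · simp [esymm_zero, hsymm_zero]
  · rw [lemmaA a n hn, if_neg hn]

lemma esymm_zero_of_gt {a r : ℕ} (h : a < r) : esymm (Fin a) ℚ r = 0 := by
  rw [esymm]
  have : (Finset.univ : Finset (Fin a)).powersetCard r = ∅ :=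
    Finset.powersetCard_eq_empty.mpr (by simpa using h)
  rw [this, Finset.sum_empty]

lemma trunc (a n : ℕ) :
    ∑ r ∈ Finset.range (a+1),
      (-1 : P a)^r * esymm (Fin a) ℚ r * (if r ≤ n then hsymm (Fin a) ℚ (n-r) else 0)
    = if n = 0 then 1 else 0 := by
  have key : ∑ r ∈ Finset.range (max a n + 1),
      (-1 : P a)^r * esymm (Fin a) ℚ r * (if r ≤ n then hsymm (Fin a) ℚ (n-r) else 0)
      = if n = 0 then 1 else 0 := by
    rw [← Finset.sum_subset (show Finset.range (n+1) ⊆ Finset.range (max a n + 1) by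
        intro x; simp only [Finset.mem_range]; omega)]
    · rw [← lemmaA' a n]
      apply Finset.sum_congr rfl
      intro r hr
      rw [Finset.mem_range] at hr
      rw [if_pos (by omega)]
    · intro r hrN hrn
      rw [Finset.mem_range] at hrN
      rw [Finset.mem_range] at hrn
      rw [if_neg (by omega), mul_zero]
  rw [← key]
  apply Finset.sum_subset (show Finset.range (a+1) ⊆ Finset.range (max a n + 1) by
    intro x; simp only [Finset.mem_range]; omega)
  intro r hrN hra
  rw [Finset.mem_range] at hrN
  rw [Finset.mem_range] at hra
  rw [esymm_zero_of_gt (by omega), mul_zero, zero_mul]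

abbrev R2 (a b : ℕ) := MvPolynomial (Fin a ⊕ Fin b) ℚ

def exl (a b r : ℕ) : R2 a b := rename (Sum.inl : Fin a → Fin a ⊕ Fin b) (esymm (Fin a) ℚ r)
def hxl (a b r : ℕ) : R2 a b := rename (Sum.inl : Fin a → Fin a ⊕ Fin b) (hsymm (Fin a) ℚ r)
def eyr (a b s : ℕ) : R2 a b := rename (Sum.inr : Fin b → Fin a ⊕ Fin b) (esymm (Fin b) ℚ s)

lemma eyr_eq_zero {a b s : ℕ} (h : b < s) : eyr a b s = 0 := by
  rw [eyr, esymm_zero_of_gt h, map_zero]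

lemma truncR (a b n : ℕ) :
    ∑ r ∈ Finset.range (a+1),
      (-1 : R2 a b)^r * exl a b r * (if r ≤ n then hxl a b (n-r) else 0)
    = if n = 0 then 1 else 0 := by
  have h := congrArg (rename (Sum.inl : Fin a → Fin a ⊕ Fin b)) (trunc a n)
  rw [map_sum] at h
  calc ∑ r ∈ Finset.range (a+1),
      (-1 : R2 a b)^r * exl a b r * (if r ≤ n then hxl a b (n-r) else 0)
      = ∑ r ∈ Finset.range (a+1), rename (Sum.inl : Fin a → Fin a ⊕ Fin b)
          ((-1 : P a)^r * esymm (Fin a) ℚ r * (if r ≤ n then hsymm (Fin a) ℚ (n-r) else 0)) := by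
        apply Finset.sum_congr rfl
        intro r _
        rw [map_mul, map_mul, map_pow, map_neg, map_one,
          apply_ite (rename (Sum.inl : Fin a → Fin a ⊕ Fin b)), map_zero]
        rfl
    _ = if n = 0 then 1 else 0 := by
        rw [h]
        split <;> simp

lemma superEInt_eq (a b K r : ℕ) :
    superEInt a b ((K : ℤ) - r)
    = ∑ s ∈ Finset.range (K+1),
        (-1 : R2 a b)^s * (if r + s ≤ K then hxl a b (K - r - s) else 0) * eyr a b s := by
  rcases le_or_gt r K with hrK | hrK
  · rw [superEInt, if_neg (by omega)]
    have ht : ((K : ℤ) - r).toNat = K - r := by omega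
    rw [ht, superElem]
    rw [← Finset.sum_subset (show Finset.range (K - r + 1) ⊆ Finset.range (K + 1) by
      intro x; simp only [Finset.mem_range]; omega)]
    · apply Finset.sum_congr rfl
      intro s hs
      rw [Finset.mem_range] at hs
      rw [if_pos (by omega)]
      rfl
    · intro s hsK hs
      rw [Finset.mem_range] at hsK
      rw [Finset.mem_range] at hs
      rw [if_neg (by omega), mul_zero, zero_mul]
  · rw [superEInt, if_pos (by omega)]
    symm
    apply Finset.sum_eq_zero
    intro s _
    rw [if_neg (by omega), mul_zero, zero_mul]

lemma lemmaB (a b K : ℕ) :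
    ∑ r ∈ Finset.range (a+1), (-1 : R2 a b)^r * exl a b r * superEInt a b ((K : ℤ) - r)
    = (-1 : R2 a b)^K * eyr a b K := by
  calc ∑ r ∈ Finset.range (a+1), (-1 : R2 a b)^r * exl a b r * superEInt a b ((K : ℤ) - r)
      = ∑ r ∈ Finset.range (a+1), ∑ s ∈ Finset.range (K+1),
          (-1 : R2 a b)^r * exl a b r *
            ((-1 : R2 a b)^s * (if r + s ≤ K then hxl a b (K - r - s) else 0) * eyr a b s) := by
        apply Finset.sum_congr rfl
        intro r _
        rw [superEInt_eq, Finset.mul_sum]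
    _ = ∑ s ∈ Finset.range (K+1), ∑ r ∈ Finset.range (a+1),
          (-1 : R2 a b)^r * exl a b r *
            ((-1 : R2 a b)^s * (if r + s ≤ K then hxl a b (K - r - s) else 0) * eyr a b s) :=
        Finset.sum_comm
    _ = ∑ s ∈ Finset.range (K+1),
          (∑ r ∈ Finset.range (a+1),
            (-1 : R2 a b)^r * exl a b r * (if r ≤ K - s then hxl a b ((K - s) - r) else 0)) *
          ((-1 : R2 a b)^s * eyr a b s) := by
        apply Finset.sum_congr rfl
        intro s hs
        rw [Finset.mem_range] at hs
        rw [Finset.sum_mul]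
        apply Finset.sum_congr rfl
        intro r _
        have hif : (if r + s ≤ K then hxl a b (K - r - s) else 0)
            = (if r ≤ K - s then hxl a b ((K - s) - r) else 0) := by
          rcases le_or_gt (r + s) K with h1 | h1
          · rw [if_pos h1, if_pos (by omega)]
            congr 1
            omega
          · rw [if_neg (by omega), if_neg (by omega)]
        rw [← hif]
        ring
    _ = ∑ s ∈ Finset.range (K+1),
          (if K - s = 0 then 1 else 0) * ((-1 : R2 a b)^s * eyr a b s) := by
        apply Finset.sum_congr rfl
        intro s _
        rw [truncR]
    _ = (-1 : R2 a b)^K * eyr a b K := by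
        rw [Finset.sum_eq_single K]
        · simp
        · intro s hs hne
          rw [Finset.mem_range] at hs
          rw [if_neg (by omega), zero_mul]
        · intro hK
          simp at hK

lemma det_eq_zero_of_block {F : Type*} [Field F] {a m : ℕ} (ham : a < m)
    (A : Matrix (Fin m) (Fin m) F)
    (hA : ∀ i c : Fin m, (i : ℕ) ≤ a → a ≤ (c : ℕ) → A i c = 0) :
    A.det = 0 := by
  classical
  have hm1 : a + 1 ≤ m := ham
  have ham' : a ≤ m := le_of_lt ham
  set B : Matrix (Fin (a+1)) (Fin m) F := A.submatrix (Fin.castLE hm1) id with hB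
  set L : (Fin (a+1) → F) →ₗ[F] (Fin a → F) :=
    (LinearMap.funLeft F F (Fin.castLE ham')).comp B.vecMulLinear with hL
  have hnotinj : ¬ Function.Injective L := by
    intro hinj
    have := LinearMap.finrank_le_finrank_of_injective hinj
    simp only [Module.finrank_pi, Fintype.card_fin] at this
    omega
  rw [Function.not_injective_iff] at hnotinj
  obtain ⟨x, y, hxy, hne⟩ := hnotinj
  set w : Fin (a+1) → F := x - y with hw
  have hw0 : w ≠ 0 := sub_ne_zero.mpr hne
  have hLw : L w = 0 := by rw [hw, map_sub, hxy, sub_self]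
  set v : Fin m → F := fun i => if h : (i : ℕ) < a + 1 then w ⟨i, h⟩ else 0 with hv
  have transfer : ∀ φ : Fin m → F,
      ∑ i : Fin m, v i * φ i = ∑ i0 : Fin (a+1), w i0 * φ (Fin.castLE hm1 i0) := by
    intro φ
    rw [← Finset.sum_filter_of_ne (p := fun i : Fin m => (i : ℕ) < a + 1)
      (by intro z _ hz
          by_contra hc
          apply hz
          simp only [hv, dif_neg hc, zero_mul])]
    refine Finset.sum_bij'
      (fun (z : Fin m) (hz : z ∈ Finset.univ.filter (fun i : Fin m => (i : ℕ) < a + 1)) =>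
        (⟨(z : ℕ), (Finset.mem_filter.mp hz).2⟩ : Fin (a+1)))
      (fun (i0 : Fin (a+1)) _ => Fin.castLE hm1 i0)
      (fun z hz => Finset.mem_univ _)
      (fun i0 _ => Finset.mem_filter.mpr ⟨Finset.mem_univ _, i0.isLt⟩)
      (fun z hz => Fin.ext rfl)
      (fun i0 _ => Fin.ext rfl)
      (fun z hz => ?_)
    have hza := (Finset.mem_filter.mp hz).2
    simp only [hv, dif_pos hza]
    congr 1
  have hv0 : v ≠ 0 := by
    intro hc
    apply hw0
    funext i0
    have h2 := congrFun hc (Fin.castLE hm1 i0)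
    simp only [hv, Fin.coe_castLE, i0.isLt, dif_pos, Pi.zero_apply] at h2
    rw [Pi.zero_apply, ← h2]
  have hvm : Matrix.vecMul v A = 0 := by
    funext c
    show ∑ i : Fin m, v i * A i c = 0
    rcases lt_or_ge (c : ℕ) a with hc | hc
    · have h1 : ∑ i0 : Fin (a+1), w i0 * B i0 (Fin.castLE ham' ⟨(c : ℕ), hc⟩) = 0 := by
        have h2 := congrFun hLw ⟨(c : ℕ), hc⟩
        simpa [hL, Matrix.vecMulLinear_apply, Matrix.vecMul, dotProduct] using h2
      rw [transfer, ← h1]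
      apply Finset.sum_congr rfl
      intro i0 _
      rw [hB]
      simp only [Matrix.submatrix_apply, id_eq]
      congr 1
    · rw [transfer]
      apply Finset.sum_eq_zero
      intro i0 _
      rw [hA _ _ (by simpa using Nat.lt_succ_iff.mp i0.isLt) hc, mul_zero]
  exact Matrix.exists_vecMul_eq_zero_iff.mp ⟨v, hv0, hvm⟩

/-- The supersymmetric Schur polynomial `π_α(x,y)` vanishes whenever the partition `α`
of length `m` does not lie in `Γ(a,b)`, i.e. whenever `α_j > b` for some `j > a`
(in `0`-indexed terms: `α j > b` for some index `j ≥ a`). -/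
theorem supSchur_eq_zero_of_not_mem_hook (a b m : ℕ) (α : Fin m → ℕ)
    (hα : Antitone α) (h : ∃ j : Fin m, a ≤ (j : ℕ) ∧ b < α j) :
    supSchur a b m α = 0 := by
  classical
  obtain ⟨j, hja, hjb⟩ := h
  have ham : a < m := lt_of_le_of_lt hja j.isLt
  have hαb : ∀ i : Fin m, (i : ℕ) ≤ a → b < α i := by
    intro i hi
    exact lt_of_lt_of_le hjb (hα (by rw [Fin.le_def]; omega))
  set M : Matrix (Fin m) (Fin m) (R2 a b) := Matrix.of fun i c : Fin m =>
    superEInt a b ((α i : ℤ) + (c : ℤ) - (i : ℤ)) with hM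
  set U : Matrix (Fin m) (Fin m) (R2 a b) := Matrix.of fun r c =>
    if (c : ℕ) < a then (if r = c then 1 else 0)
    else (if (r : ℕ) ≤ (c : ℕ) ∧ (c : ℕ) - (r : ℕ) ≤ a then
      (-1 : R2 a b) ^ ((c : ℕ) - (r : ℕ)) * exl a b ((c : ℕ) - (r : ℕ)) else 0) with hU
  have hUtri : U.BlockTriangular id := by
    intro r c hrc
    simp only [id_eq] at hrc
    have hrc' : (c : ℕ) < (r : ℕ) := hrc
    rw [hU]
    simp only [Matrix.of_apply]
    rcases lt_or_ge (c : ℕ) a with hca | hca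
    · rw [if_pos hca, if_neg (by intro hc; rw [hc] at hrc; exact lt_irrefl _ hrc)]
    · rw [if_neg (by omega), if_neg (by omega)]
  have hUdet : U.det = 1 := by
    rw [Matrix.det_of_upperTriangular hUtri]
    apply Finset.prod_eq_one
    intro i _
    rw [hU]
    simp only [Matrix.of_apply]
    rcases lt_or_ge (i : ℕ) a with hia | hia
    · rw [if_pos hia]
      simp
    · rw [if_neg (by omega), if_pos (by omega)]
      simp only [Nat.sub_self, pow_zero, one_mul]
      rw [exl, esymm_zero, map_one]
  have hN : ∀ i c : Fin m, (i : ℕ) ≤ a → a ≤ (c : ℕ) → (M * U) i c = 0 := by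
    intro i c hia hac
    have hcm : (c : ℕ) < m := c.isLt
    rw [Matrix.mul_apply]
    have step1 : ∑ r : Fin m, M i r * U r c
        = ∑ r : Fin m, (if (r : ℕ) ≤ (c : ℕ) ∧ (c : ℕ) - (r : ℕ) ≤ a then
            M i r * ((-1 : R2 a b) ^ ((c : ℕ) - (r : ℕ)) * exl a b ((c : ℕ) - (r : ℕ))) else 0) := by
      apply Finset.sum_congr rfl
      intro r _
      rw [hU]
      simp only [Matrix.of_apply]
      rw [if_neg (by omega)]
      split
      · rfl
      · rw [mul_zero]
    rw [step1, ← Finset.sum_filter]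
    have step2 : ∑ r ∈ Finset.univ.filter
          (fun r : Fin m => (r : ℕ) ≤ (c : ℕ) ∧ (c : ℕ) - (r : ℕ) ≤ a),
          M i r * ((-1 : R2 a b) ^ ((c : ℕ) - (r : ℕ)) * exl a b ((c : ℕ) - (r : ℕ)))
        = ∑ t ∈ Finset.range (a + 1),
            (-1 : R2 a b) ^ t * exl a b t *
              superEInt a b (((α i + ((c : ℕ) - (i : ℕ)) : ℕ) : ℤ) - t) := by
      refine Finset.sum_bij'
        (fun (r : Fin m) _ => (c : ℕ) - (r : ℕ))
        (fun (t : ℕ) (ht : t ∈ Finset.range (a + 1)) =>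
          (⟨(c : ℕ) - t, by omega⟩ : Fin m))
        (fun r hr => by
          have hr' := (Finset.mem_filter.mp hr).2
          show (c : ℕ) - (r : ℕ) ∈ Finset.range (a + 1)
          rw [Finset.mem_range]
          omega)
        (fun t ht => by
          have ht' := Finset.mem_range.mp ht
          refine Finset.mem_filter.mpr ⟨Finset.mem_univ _, ?_, ?_⟩
          · show (c : ℕ) - t ≤ (c : ℕ)
            omega
          · show (c : ℕ) - ((c : ℕ) - t) ≤ a
            omega)
        (fun r hr => by
          have hr' := (Finset.mem_filter.mp hr).2
          apply Fin.ext
          show (c : ℕ) - ((c : ℕ) - (r : ℕ)) = (r : ℕ)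
          omega)
        (fun t ht => by
          have ht' := Finset.mem_range.mp ht
          show (c : ℕ) - ((c : ℕ) - t) = t
          omega)
        (fun r hr => ?_)
      have hr' := (Finset.mem_filter.mp hr).2
      have hidx : (((α i + ((c : ℕ) - (i : ℕ)) : ℕ) : ℤ) - (((c : ℕ) - (r : ℕ) : ℕ) : ℤ))
          = (α i : ℤ) + (r : ℤ) - (i : ℤ) := by
        have h1 : (i : ℕ) ≤ (c : ℕ) := le_trans hia hac
        have h2 : (r : ℕ) ≤ (c : ℕ) := hr'.1
        push_cast [Nat.cast_sub h1, Nat.cast_sub h2]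
        omega
      rw [hM]
      simp only [Matrix.of_apply]
      rw [hidx]
      ring
    rw [step2, lemmaB]
    have hbi := hαb i hia
    rw [eyr_eq_zero (by omega), mul_zero]
  have hdet : supSchur a b m α = (M * U).det := by
    rw [Matrix.det_mul, hUdet, mul_one]
    rfl
  rw [hdet]
  -- pass to the fraction field
  set F := FractionRing (R2 a b)
  have hφ : Function.Injective (algebraMap (R2 a b) F) := IsFractionRing.injective _ _
  apply hφ
  rw [map_zero, RingHom.map_det]
  apply det_eq_zero_of_block ham
  intro i c hia hac
  show (algebraMap (R2 a b) F) ((M * U) i c) = 0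
  rw [hN i c hia hac, map_zero]
end
end

section
/- For a = λ_i, b = λ_{i+1}, the bimodule map sending p ↦ ∂_{x v̲}(∑_{ℓ=0}^{b} (-1)^ℓ e_{b-ℓ}(t̲) x^{ℓ+r} p), which is the image of the r-dotted clockwise bubble under the 2-representation F_Bim, equals multiplication by (-1)^b ∑_{l=0}^{b-a+r+1} (-1)^l e_l(t̲) h_{b-a+r+1-l}(u̲) on the ring of partially symmetric polynomials; in particular it is zero when r < a-b-1 and equals (-1)^b times the identity when r = a-b-1. -/
open MvPolynomial

noncomputable section

variable {σ : Type} [DecidableEq σ]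

/-- The automorphism of the field of rational functions swapping the variables `v`, `w`. -/
noncomputable def swapVars (v w : σ) :
    FractionRing (MvPolynomial σ ℚ) ≃+* FractionRing (MvPolynomial σ ℚ) :=
  IsFractionRing.ringEquivOfRingEquiv
    (MvPolynomial.renameEquiv ℚ (Equiv.swap v w)).toRingEquiv

/-- The divided difference operator `∂_{v w} f = (f - f|_{v ↔ w}) / (X v - X w)`. -/
noncomputable def divDiff (v w : σ) (f : FractionRing (MvPolynomial σ ℚ)) :
    FractionRing (MvPolynomial σ ℚ) :=
  (f - swapVars v w f) /
    algebraMap (MvPolynomial σ ℚ) (FractionRing (MvPolynomial σ ℚ)) (X v - X w)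

/-- The variables: `t_1,…,t_b` are the `Sum.inl` variables, and the `u`-alphabet
`u_1,…,u_a` consists of all `Sum.inr` variables; among the latter, `x := u_1` and
`v_1,…,v_{a-1}` are the remaining ones, so that `e_l(x, v̲) = e_l(u̲)` holds. -/
abbrev BubbleVars (a b : ℕ) : Type := Fin b ⊕ Fin a

/-- The iterated divided difference `∂_{x v̲} = ∂_{x v_1} ⋯ ∂_{x v_{a-1}}` applied to
`∑_{ℓ=0}^{b} (-1)^ℓ e_{b-ℓ}(t̲) x^{ℓ+r} p`; this is the image of `p` under the image of
the `r`-dotted clockwise bubble under the 2-representation `F_Bim`. -/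
noncomputable def bubbleImage (a b r : ℕ) (ha : 0 < a)
    (p : MvPolynomial (BubbleVars a b) ℚ) :
    FractionRing (MvPolynomial (BubbleVars a b) ℚ) :=
  ((List.finRange a).filter fun i => i ≠ (⟨0, ha⟩ : Fin a)).foldr
    (fun i acc => divDiff (Sum.inr (⟨0, ha⟩ : Fin a)) (Sum.inr i) acc)
    (algebraMap (MvPolynomial (BubbleVars a b) ℚ)
      (FractionRing (MvPolynomial (BubbleVars a b) ℚ))
      (∑ l ∈ Finset.range (b + 1),
        (-1 : MvPolynomial (BubbleVars a b) ℚ) ^ l *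
          rename Sum.inl (esymm (Fin b) ℚ (b - l)) *
          X (Sum.inr (⟨0, ha⟩ : Fin a)) ^ (l + r) * p))

set_option linter.unusedSectionVars false
set_option maxHeartbeats 1000000

noncomputable def hh : List σ → ℤ → MvPolynomial σ ℚ
  | [], m => if m = 0 then 1 else 0
  | y :: ys, m => ∑ j ∈ Finset.range (m.toNat + 1), X y ^ j * hh ys (m - j)

lemma hh_neg (l : List σ) {m : ℤ} (hm : m < 0) : hh l m = 0 := by
  induction l generalizing m with
  | nil => simp [hh, hm.ne]
  | cons y ys ih =>
    rw [hh]
    refine Finset.sum_eq_zero fun j _ => ?_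
    rw [ih (by omega), mul_zero]

lemma hh_rec (y : σ) (ys : List σ) (m : ℤ) :
    hh (y :: ys) m = X y * hh (y :: ys) (m - 1) + hh ys m := by
  rcases lt_trichotomy m 0 with h | h | h
  · rw [hh_neg _ h, hh_neg _ (by omega), hh_neg _ h, mul_zero, add_zero]
  · subst h
    rw [hh, hh_neg (y :: ys) (by omega)]
    simp
  · obtain ⟨k, hk⟩ : ∃ k : ℕ, m.toNat = k + 1 := ⟨m.toNat - 1, by omega⟩
    rw [hh, hk, Finset.sum_range_succ']
    have h1 : (m - 1).toNat = k := by omega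
    rw [hh, h1]
    have key : ∀ j ∈ Finset.range (k + 1),
        X (R := ℚ) y ^ (j + 1) * hh ys (m - (j + 1 : ℕ)) =
          X y * (X y ^ j * hh ys (m - 1 - j)) := by
      intro j _
      have h2 : m - ((j : ℕ) + 1 : ℕ) = m - 1 - j := by push_cast; ring
      rw [h2]; ring
    rw [Finset.sum_congr rfl key, ← Finset.mul_sum]
    simp

variable {τ : Type}

lemma hh_map (f : σ → τ) (l : List σ) (m : ℤ) :
    rename f (hh l m) = hh (l.map f) m := by
  induction l generalizing m with
  | nil => simp only [hh, List.map_nil]; split <;> simp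
  | cons y ys ih =>
    simp only [hh, List.map_cons, map_sum, map_mul, map_pow, rename_X, ih]

lemma hh_swap_fixed {x w : σ} {l : List σ} (hx : x ∉ l) (hw : w ∉ l) (m : ℤ) :
    rename (Equiv.swap x w) (hh l m) = hh l m := by
  rw [hh_map]
  congr 1
  rw [List.map_congr_left fun y hy =>
    Equiv.swap_apply_of_ne_of_ne (by rintro rfl; exact hx hy) (by rintro rfl; exact hw hy)]
  exact List.map_id l

lemma hh_second_rec (x w : σ) (ys : List σ) (m : ℤ) :
    hh (x :: w :: ys) m = X w * hh (x :: w :: ys) (m - 1) + hh (x :: ys) m := by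
  have expand : ∀ n : ℤ, hh (x :: w :: ys) n =
      X w * (∑ j ∈ Finset.range (n.toNat + 1), X x ^ j * hh (w :: ys) (n - 1 - j)) +
        hh (x :: ys) n := by
    intro n
    rw [hh, hh]
    have key : ∀ j ∈ Finset.range (n.toNat + 1),
        X (R := ℚ) x ^ j * hh (w :: ys) (n - j) =
          X w * (X x ^ j * hh (w :: ys) (n - 1 - j)) + X x ^ j * hh ys (n - j) := by
      intro j _
      rw [hh_rec w ys (n - j)]
      have h3 : n - j - 1 = n - 1 - j := by ring
      rw [h3]; ring
    rw [Finset.sum_congr rfl key, Finset.sum_add_distrib, Finset.mul_sum]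
  rw [expand m]
  congr 2
  conv_rhs => rw [hh]
  rcases le_or_gt m 0 with h | h
  · have h4 : m.toNat = 0 := by omega
    have h5 : (m - 1).toNat = 0 := by omega
    rw [h4, h5]
  · have h1 : m.toNat = (m - 1).toNat + 1 := by omega
    rw [h1, Finset.sum_range_succ]
    have h2 : m - 1 - ((m - 1).toNat + 1 : ℕ) < 0 := by omega
    rw [hh_neg _ h2, mul_zero, add_zero]

lemma hh_sub_swap {x w : σ} (hxw : x ≠ w) {ys : List σ} (hx : x ∉ ys) (hw : w ∉ ys) (N : ℤ) :
    hh (x :: ys) N - rename (Equiv.swap x w) (hh (x :: ys) N) =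
      (X x - X w) * hh (x :: w :: ys) (N - 1) := by
  induction N using Int.induction_on with
  | zero =>
    have h0 : hh (x :: ys) 0 = hh ys 0 := by
      rw [hh_rec, hh_neg _ (by omega), mul_zero, zero_add]
    rw [h0, hh_swap_fixed hx hw, sub_self, hh_neg _ (by omega), mul_zero]
  | succ n ih =>
    rw [hh_rec x ys, map_add, map_mul, rename_X, Equiv.swap_apply_left]
    push_cast
    rw [add_sub_cancel_right]
    rw [hh_swap_fixed hx hw]
    have step := hh_second_rec x w ys ((n : ℤ) + 1 - 1)
    rw [add_sub_cancel_right] at step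
    rw [step]
    set A := hh (x :: ys) (n : ℤ)
    set B := rename (Equiv.swap x w) A with hB
    have : X (R := ℚ) x * A + hh ys (n+1) - (X w * B + hh ys (n+1))
        = (X x - X w) * A + X w * (A - B) := by ring
    rw [this, ih]
    ring
  | pred n ih =>
    rw [hh_neg _ (by omega), hh_neg _ (by omega), map_zero, sub_zero, mul_zero]

lemma swapVars_algebraMap (v w : σ) (f : MvPolynomial σ ℚ) :
    swapVars v w (algebraMap _ (FractionRing (MvPolynomial σ ℚ)) f) =
      algebraMap _ _ (rename (Equiv.swap v w) f) := by
  simpa [swapVars] using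
    IsLocalization.ringEquivOfRingEquiv_eq (M := nonZeroDivisors (MvPolynomial σ ℚ)) _ f

lemma divDiff_algebraMap {v w : σ} (hvw : v ≠ w) {f g : MvPolynomial σ ℚ}
    (h : f - rename (Equiv.swap v w) f = (X v - X w) * g) :
    divDiff v w (algebraMap _ _ f) = algebraMap _ (FractionRing (MvPolynomial σ ℚ)) g := by
  rw [divDiff, swapVars_algebraMap, ← map_sub, h, map_mul]
  have hne : (X (R := ℚ) v - X w) ≠ 0 := by
    have := MvPolynomial.X_injective (R := ℚ) (σ := σ)
    intro hc
    exact hvw (this (by linear_combination (norm := ring_nf) hc))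
  have hne2 : algebraMap (MvPolynomial σ ℚ) (FractionRing (MvPolynomial σ ℚ))
      (X v - X w) ≠ 0 := fun hc => hne (IsFractionRing.to_map_eq_zero_iff.mp hc)
  rw [mul_div_cancel_left₀ _ hne2]

lemma divDiff_sum {ι : Type*} (v w : σ) (s : Finset ι)
    (F : ι → FractionRing (MvPolynomial σ ℚ)) :
    divDiff v w (∑ i ∈ s, F i) = ∑ i ∈ s, divDiff v w (F i) := by
  simp only [divDiff, map_sum, ← Finset.sum_sub_distrib, Finset.sum_div]

lemma foldr_divDiff_sum {ι : Type*} (v : σ) (L : List σ) (s : Finset ι)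
    (F : ι → FractionRing (MvPolynomial σ ℚ)) :
    L.foldr (fun w acc => divDiff v w acc) (∑ i ∈ s, F i) =
      ∑ i ∈ s, L.foldr (fun w acc => divDiff v w acc) (F i) := by
  induction L with
  | nil => simp
  | cons w L ih => simp only [List.foldr_cons, ih, divDiff_sum]

noncomputable def HHF (S : Finset σ) (n : ℕ) : MvPolynomial σ ℚ :=
  ∑ s ∈ S.sym n, (s.1.map X).prod

lemma HHF_zero (S : Finset σ) : HHF S 0 = 1 := by
  rw [HHF, Finset.sym_zero, Finset.sum_singleton]
  rfl

lemma HHF_insert {a : σ} {S : Finset σ} (ha : a ∉ S) (n : ℕ) :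
    HHF (insert a S) n = ∑ j ∈ Finset.range (n + 1), X a ^ j * HHF S (n - j) := by
  have : ∀ j ∈ Finset.range (n+1), X (R := ℚ) a ^ j * HHF S (n - j) =
      ∑ m ∈ S.sym (n - j), X a ^ j * (m.1.map X).prod := by
    intro j _
    rw [HHF, Finset.mul_sum]
  rw [Finset.sum_congr rfl this, ← Fin.sum_univ_eq_sum_range
    (fun j => ∑ m ∈ S.sym (n - j), X (R := ℚ) a ^ j * (m.1.map X).prod)]
  rw [← Finset.sum_sigma (Finset.univ : Finset (Fin (n+1))) (fun j => S.sym (n - j))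
    (fun q => X (R := ℚ) a ^ (q.1 : ℕ) * (q.2.1.map X).prod)]
  rw [HHF]
  refine Finset.sum_nbij' (fun m => m.filterNe a) (fun q => q.2.fill a q.1) ?_ ?_ ?_ ?_ ?_
  · intro m hm
    simp only [Finset.mem_sigma, Finset.mem_univ, true_and]
    have h2 := Finset.sym_filterNe_mem a hm
    rwa [Finset.erase_insert ha] at h2
  · intro q hq
    simp only [Finset.mem_sigma, Finset.mem_univ, true_and] at hq
    exact Finset.sym_fill_mem a hq
  · intro m _
    exact Sym.fill_filterNe a m
  · intro q hq
    simp only [Finset.mem_sigma, Finset.mem_univ, true_and] at hq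
    refine Sym.filter_ne_fill a q fun hc => ha ?_
    exact Finset.mem_sym_iff.mp hq a hc
  · intro m _
    conv_lhs => rw [← Sym.fill_filterNe a m]
    have hc : (Sym.fill a (Sym.filterNe a m).fst (Sym.filterNe a m).snd).1 =
        (Sym.filterNe a m).snd.1 +
          Multiset.replicate ((Sym.filterNe a m).fst : ℕ) a := Sym.coe_fill
    rw [hc, Multiset.map_add, Multiset.prod_add, Multiset.map_replicate,
      Multiset.prod_replicate]
    ring

lemma hh_eq_HHF {l : List σ} (hl : l.Nodup) (n : ℕ) :
    hh l (n : ℤ) = HHF l.toFinset n := by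
  induction l generalizing n with
  | nil =>
    rw [List.toFinset_nil, HHF]
    rcases Nat.eq_zero_or_pos n with rfl | hn
    · simp [hh]
      rfl
    · obtain ⟨k, rfl⟩ : ∃ k, n = k + 1 := ⟨n - 1, by omega⟩
      rw [hh, Finset.sym_empty k]
      simp
      omega
  | cons y ys ih =>
    rw [List.nodup_cons] at hl
    rw [List.toFinset_cons, HHF_insert (by simpa using hl.1), hh]
    have hn : (n : ℤ).toNat = n := Int.toNat_natCast n
    rw [hn]
    refine Finset.sum_congr rfl fun j hj => ?_
    rw [Finset.mem_range] at hj
    have : (n : ℤ) - j = ((n - j : ℕ) : ℤ) := by omega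
    rw [this, ih hl.2]

lemma HHF_univ_eq_hsymm [Fintype σ] (n : ℕ) : HHF (Finset.univ : Finset σ) n = hsymm σ ℚ n := by
  rw [HHF, hsymm, Finset.sym_univ]

lemma hh_single (y : σ) (n : ℕ) : hh [y] (n : ℤ) = X y ^ n := by
  rw [hh]
  have hn : (n : ℤ).toNat = n := Int.toNat_natCast n
  rw [hn, Finset.sum_range_succ]
  have h1 : ∀ j ∈ Finset.range n, X (R := ℚ) y ^ j * hh [] ((n : ℤ) - j) = 0 := by
    intro j hj
    rw [Finset.mem_range] at hj
    rw [hh]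
    rw [if_neg (by omega), mul_zero]
  rw [Finset.sum_congr rfl h1, Finset.sum_const_zero, zero_add, hh, sub_self, if_pos rfl,
    mul_one]

lemma fold_divDiff (x : σ) (L : List σ) (hnd : (x :: L).Nodup) (q : MvPolynomial σ ℚ)
    (hq : ∀ w ∈ L, rename (Equiv.swap x w) q = q) (N : ℤ) :
    L.foldr (fun w acc => divDiff x w acc)
      (algebraMap _ (FractionRing (MvPolynomial σ ℚ)) (q * hh [x] N)) =
    algebraMap _ (FractionRing (MvPolynomial σ ℚ)) (q * hh (x :: L) (N - L.length)) := by
  induction L with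
  | nil => simp
  | cons w L ih =>
    rw [List.nodup_cons, List.mem_cons, not_or, List.nodup_cons] at hnd
    obtain ⟨⟨hxw, hxL⟩, hwL, hndL⟩ := hnd
    rw [List.foldr_cons,
      ih (List.nodup_cons.mpr ⟨hxL, hndL⟩) (fun w hw => hq w (List.mem_cons_of_mem _ hw))]
    rw [divDiff_algebraMap hxw (g := q * hh (x :: w :: L) (N - L.length - 1))]
    · congr 2
      simp only [List.length_cons]
      push_cast
      ring
    · rw [map_mul, hq w List.mem_cons_self, ← mul_sub,
        hh_sub_swap hxw hxL hwL]
      ring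

lemma esymm_vanish {b l : ℕ} (h : b < l) : esymm (Fin b) ℚ l = 0 := by
  rw [esymm, Finset.powersetCard_eq_empty.mpr (by simpa using h), Finset.sum_empty]

lemma sumCongr_swap_inr {b a : ℕ} (i j : Fin a) :
    ⇑(Equiv.sumCongr (Equiv.refl (Fin b)) (Equiv.swap i j)) =
      ⇑(Equiv.swap (Sum.inr i : BubbleVars a b) (Sum.inr j)) := by
  funext s
  cases s with
  | inl t =>
    simp [Equiv.swap_apply_of_ne_of_ne]
  | inr u =>
    rcases eq_or_ne u i with rfl | hui
    · simp
    · rcases eq_or_ne u j with rfl | huj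
      · simp
      · simp [Equiv.swap_apply_of_ne_of_ne, hui, huj,
          Equiv.swap_apply_of_ne_of_ne (fun hc => hui (Sum.inr.inj hc))
            (fun hc => huj (Sum.inr.inj hc))]

theorem bubbleImage_eq_main (a b r : ℕ) (ha : 0 < a)
    (p : MvPolynomial (BubbleVars a b) ℚ)
    (hp : ∀ (g : Equiv.Perm (Fin b)) (h : Equiv.Perm (Fin a)),
      rename (Equiv.sumCongr g h) p = p) :
    bubbleImage a b r ha p =
      algebraMap (MvPolynomial (BubbleVars a b) ℚ)
        (FractionRing (MvPolynomial (BubbleVars a b) ℚ))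
        (p * (-1 : MvPolynomial (BubbleVars a b) ℚ) ^ b *
          ∑ l ∈ Finset.range (b + r + 2 - a),
            (-1 : MvPolynomial (BubbleVars a b) ℚ) ^ l *
              rename Sum.inl (esymm (Fin b) ℚ l) *
              rename Sum.inr (hsymm (Fin a) ℚ (b + r + 1 - a - l))) := by
  classical
  obtain ⟨n, rfl⟩ : ∃ n, a = n + 1 := ⟨a - 1, by omega⟩
  set x0 : Fin (n + 1) := ⟨0, ha⟩ with hx0
  have hx00 : x0 = 0 := rfl
  set Lf : List (Fin (n + 1)) := (List.finRange (n + 1)).filter (fun i => i ≠ x0) with hLf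
  -- structure of the filtered list
  have hLf_eq : Lf = (List.finRange n).map Fin.succ := by
    rw [hLf, hx00, List.finRange_succ, List.filter_cons]
    have hd : (decide ((0 : Fin (n+1)) ≠ 0)) = false := by simp
    rw [hd]
    simp only [Bool.false_eq_true, if_false]
    rw [List.filter_eq_self.mpr]
    intro c hc
    simp only [List.mem_map] at hc
    obtain ⟨d, _, rfl⟩ := hc
    simpa using Fin.succ_ne_zero d
  have hfull : (Sum.inr x0 : BubbleVars (n+1) b) :: Lf.map Sum.inr =
      (List.finRange (n + 1)).map Sum.inr := by
    rw [hLf_eq, hx00, List.finRange_succ]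
    simp [List.map_map]
  have hLf_len : Lf.length = n := by
    have h6 := congrArg List.length hfull
    simp at h6
    omega
  have hnodup : ((Sum.inr x0 : BubbleVars (n+1) b) :: Lf.map Sum.inr).Nodup := by
    rw [hfull]
    exact (List.nodup_finRange (n + 1)).map Sum.inr_injective
  -- the G function
  set G : ℤ → MvPolynomial (BubbleVars (n+1) b) ℚ :=
    fun m => rename Sum.inr (hh (List.finRange (n + 1)) m) with hG
  have hGneg : ∀ m : ℤ, m < 0 → G m = 0 := by
    intro m hm; rw [hG]; simp only; rw [hh_neg _ hm, map_zero]
  have hGnat : ∀ k : ℕ, G (k : ℤ) = rename Sum.inr (hsymm (Fin (n+1)) ℚ k) := by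
    intro k
    rw [hG]; simp only
    rw [hh_eq_HHF (List.nodup_finRange (n + 1)) k, List.toFinset_finRange,
      HHF_univ_eq_hsymm]
  -- start
  rw [bubbleImage]
  rw [← List.foldr_map (f := Sum.inr)
    (g := fun w acc => divDiff (Sum.inr (⟨0, ha⟩ : Fin (n+1))) w acc) (l := Lf)]
  rw [map_sum, foldr_divDiff_sum]
  have hterm : ∀ l ∈ Finset.range (b + 1),
      (Lf.map Sum.inr).foldr
        (fun w acc => divDiff (Sum.inr (⟨0, ha⟩ : Fin (n+1))) w acc)
        (algebraMap (MvPolynomial (BubbleVars (n+1) b) ℚ)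
          (FractionRing (MvPolynomial (BubbleVars (n+1) b) ℚ))
          ((-1 : MvPolynomial (BubbleVars (n+1) b) ℚ) ^ l *
            rename Sum.inl (esymm (Fin b) ℚ (b - l)) *
            X (Sum.inr (⟨0, ha⟩ : Fin (n+1))) ^ (l + r) * p)) =
      algebraMap (MvPolynomial (BubbleVars (n+1) b) ℚ)
        (FractionRing (MvPolynomial (BubbleVars (n+1) b) ℚ))
        (((-1 : MvPolynomial (BubbleVars (n+1) b) ℚ) ^ l *
            rename Sum.inl (esymm (Fin b) ℚ (b - l)) * p) * G ((l + r : ℕ) - (n : ℤ))) := by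
    intro l _
    set q : MvPolynomial (BubbleVars (n+1) b) ℚ :=
      (-1 : MvPolynomial (BubbleVars (n+1) b) ℚ) ^ l *
        rename Sum.inl (esymm (Fin b) ℚ (b - l)) * p with hq
    have hinit : (-1 : MvPolynomial (BubbleVars (n+1) b) ℚ) ^ l *
        rename Sum.inl (esymm (Fin b) ℚ (b - l)) *
        X (Sum.inr (⟨0, ha⟩ : Fin (n+1))) ^ (l + r) * p =
        q * hh [Sum.inr (⟨0, ha⟩ : Fin (n+1))] ((l + r : ℕ) : ℤ) := by
      rw [hh_single, hq]; ring
    rw [hinit]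
    have hqinv : ∀ w ∈ Lf.map Sum.inr,
        rename (Equiv.swap (Sum.inr (⟨0, ha⟩ : Fin (n+1)) : BubbleVars (n+1) b) w) q = q := by
      intro w hw
      obtain ⟨i, _, rfl⟩ := List.mem_map.mp hw
      rw [hq, map_mul, map_mul, map_pow, map_neg, map_one]
      rw [rename_rename]
      have hcomp : (⇑(Equiv.swap (Sum.inr (⟨0, ha⟩ : Fin (n+1)) : BubbleVars (n+1) b)
          (Sum.inr i)) ∘ Sum.inl) = Sum.inl := by
        funext t
        exact Equiv.swap_apply_of_ne_of_ne (by simp) (by simp)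
      rw [hcomp]
      rw [← sumCongr_swap_inr, hp (Equiv.refl (Fin b)) (Equiv.swap (⟨0, ha⟩ : Fin (n+1)) i)]
    rw [fold_divDiff _ _ hnodup q hqinv]
    rw [List.length_map, hLf_len, hfull, ← hh_map]
  rw [Finset.sum_congr rfl hterm, ← map_sum]
  congr 1
  -- now a polynomial identity
  rw [← Finset.sum_range_reflect]
  have h1 : ∀ l ∈ Finset.range (b + 1),
      (-1 : MvPolynomial (BubbleVars (n+1) b) ℚ) ^ (b + 1 - 1 - l) *
          rename Sum.inl (esymm (Fin b) ℚ (b - (b + 1 - 1 - l))) * p *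
          G (((b + 1 - 1 - l + r : ℕ) : ℤ) - (n : ℤ)) =
      (-1 : MvPolynomial (BubbleVars (n+1) b) ℚ) ^ b *
        ((-1 : MvPolynomial (BubbleVars (n+1) b) ℚ) ^ l *
          rename Sum.inl (esymm (Fin b) ℚ l) * p *
          G ((b : ℤ) + r + 1 - (n + 1) - l)) := by
    intro l hl
    rw [Finset.mem_range] at hl
    have hlb : l ≤ b := by omega
    have e1 : b + 1 - 1 - l = b - l := by omega
    have e2 : b - (b - l) = l := by omega
    have e3 : ((b - l + r : ℕ) : ℤ) - (n : ℤ) = (b : ℤ) + r + 1 - (n + 1) - l := by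
      push_cast [Nat.cast_sub hlb]; ring
    have e4 : (-1 : MvPolynomial (BubbleVars (n+1) b) ℚ) ^ (b - l) =
        (-1) ^ b * (-1) ^ l := by
      have h5 : (-1 : MvPolynomial (BubbleVars (n+1) b) ℚ) ^ b =
          (-1) ^ (b - l) * (-1) ^ l := by
        rw [← pow_add]
        congr 1
        omega
      have h7 : ((-1 : MvPolynomial (BubbleVars (n+1) b) ℚ) ^ (l + l)) = 1 := by
        rw [← two_mul, pow_mul]
        norm_num
      rw [h5, mul_assoc, ← pow_add, h7, mul_one]
    rw [e1, e2, e3, e4]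
    ring
  rw [Finset.sum_congr rfl h1]
  -- now compare ranges
  set u : ℕ → MvPolynomial (BubbleVars (n+1) b) ℚ := fun l =>
    (-1 : MvPolynomial (BubbleVars (n+1) b) ℚ) ^ l *
      rename Sum.inl (esymm (Fin b) ℚ l) * p * G ((b : ℤ) + r + 1 - (n + 1) - l) with hu
  have hKb : ∑ l ∈ Finset.range (b + 1), u l = ∑ l ∈ Finset.range (b + r + 2 - (n+1)), u l := by
    set K := b + r + 2 - (n + 1) with hK
    set M := max (b + 1) K with hM
    have s1 : ∑ l ∈ Finset.range (b + 1), u l = ∑ l ∈ Finset.range M, u l := by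
      refine Finset.sum_subset (Finset.range_subset_range.mpr (le_max_left _ _)) ?_
      intro l _ hnot
      rw [Finset.mem_range, not_lt] at hnot
      rw [hu]
      simp only
      rw [esymm_vanish (by omega), map_zero]
      ring
    have s2 : ∑ l ∈ Finset.range K, u l = ∑ l ∈ Finset.range M, u l := by
      refine Finset.sum_subset (Finset.range_subset_range.mpr (le_max_right _ _)) ?_
      intro l _ hnot
      rw [Finset.mem_range, not_lt] at hnot
      rw [hu]
      simp only
      rw [hGneg _ (by omega)]
      ring
    rw [s1, ← s2]
  rw [← Finset.mul_sum, hKb]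
  rw [Finset.mul_sum, Finset.mul_sum]
  refine Finset.sum_congr rfl fun l hl => ?_
  rw [Finset.mem_range] at hl
  have e5 : ((b : ℤ) + r + 1 - (n + 1) - l) = ((b + r + 1 - (n + 1) - l : ℕ) : ℤ) := by omega
  rw [hu]
  simp only
  rw [e5, hGnat]
  ring

/-- For a polynomial `p(t̲,u̲)` symmetric in `t̲` and in `u̲` separately, the image of the
`r`-dotted clockwise bubble acts as multiplication by
`(-1)^b ∑_{l=0}^{b-a+r+1} (-1)^l e_l(t̲) h_{b-a+r+1-l}(u̲)`; in particular it is zero when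
`r < a-b-1`, and it is `(-1)^b` times the identity when `r = a-b-1`. -/
theorem bubbleImage_eq (a b r : ℕ) (ha : 0 < a)
    (p : MvPolynomial (BubbleVars a b) ℚ)
    (hp : ∀ (g : Equiv.Perm (Fin b)) (h : Equiv.Perm (Fin a)),
      rename (Equiv.sumCongr g h) p = p) :
    bubbleImage a b r ha p =
      algebraMap (MvPolynomial (BubbleVars a b) ℚ)
        (FractionRing (MvPolynomial (BubbleVars a b) ℚ))
        (p * (-1 : MvPolynomial (BubbleVars a b) ℚ) ^ b *
          ∑ l ∈ Finset.range (b + r + 2 - a),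
            (-1 : MvPolynomial (BubbleVars a b) ℚ) ^ l *
              rename Sum.inl (esymm (Fin b) ℚ l) *
              rename Sum.inr (hsymm (Fin a) ℚ (b + r + 1 - a - l))) ∧
    (b + r + 2 ≤ a → bubbleImage a b r ha p = 0) ∧
    (a = b + r + 1 →
      bubbleImage a b r ha p =
        algebraMap (MvPolynomial (BubbleVars a b) ℚ)
          (FractionRing (MvPolynomial (BubbleVars a b) ℚ))
          ((-1 : MvPolynomial (BubbleVars a b) ℚ) ^ b * p)) := by
  have main := bubbleImage_eq_main a b r ha p hp
  refine ⟨main, ?_, ?_⟩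
  · intro h2
    rw [main]
    have : b + r + 2 - a = 0 := by omega
    rw [this]
    simp
  · intro h3
    rw [main]
    have : b + r + 2 - a = 1 := by omega
    rw [this]
    rw [Finset.sum_range_one]
    have h4 : b + r + 1 - a - 0 = 0 := by omega
    rw [h4, hsymm_zero, esymm_zero, pow_zero, map_one, map_one]
    congr 1
    ring
end
end

section
/- For partitions α, β contained in the (a × b)-rectangle region Γ(a,b) (i.e. α_j ≤ b for j > a), the supersymmetric Schur polynomials multiply according to the Littlewood-Richardson rule: π_α(x,y) π_β(x,y) = ∑_γ c_{αβ}^γ π_γ(x,y), where c_{αβ}^γ are the Littlewood-Richardson coefficients. -/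
open MvPolynomial
open Finset

noncomputable section

/-- `h_k(x)` for an integer index, with value `0` for `k < 0`. -/
noncomputable def hInt (N : ℕ) (k : ℤ) : MvPolynomial (Fin N) ℚ :=
  if k < 0 then 0 else hsymm (Fin N) ℚ k.toNat

/-- The ordinary Schur polynomial `s_γ(x_1,…,x_N) = det(h_{γ_i+j-i})` (Jacobi–Trudi). -/
noncomputable def ordSchur (N m : ℕ) (γ : Fin m → ℕ) : MvPolynomial (Fin N) ℚ :=
  Matrix.det (Matrix.of fun i j : Fin m => hInt N ((γ i : ℤ) + (j : ℤ) - (i : ℤ)))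

/-- The finite set of partitions of `s` with at most `m` parts. -/
def partFinset (m s : ℕ) : Finset (Fin m → ℕ) :=
  ((Finset.univ : Finset (Fin m → Fin (s + 1))).image fun f j => (f j : ℕ)).filter
    fun γ => Antitone γ ∧ ∑ i, γ i = s


variable {N : ℕ}

def ssj (p : Finset (Fin N) × Multiset (Fin N)) (h : p.1.1 + p.2 ≠ 0) : Fin N :=
  (p.1.1 + p.2).toFinset.max' (Multiset.toFinset_nonempty.2 h)

lemma ssj_congr (p q : Finset (Fin N) × Multiset (Fin N)) (h : p.1.1 + p.2 ≠ 0)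
    (h' : q.1.1 + q.2 ≠ 0) (e : p.1.1 + p.2 = q.1.1 + q.2) : ssj p h = ssj q h' := by
  unfold ssj
  congr 1
  rw [e]

lemma ssj_mem (p : Finset (Fin N) × Multiset (Fin N)) (h : p.1.1 + p.2 ≠ 0) :
    ssj p h ∈ p.1.1 + p.2 := by
  have := (p.1.1 + p.2).toFinset.max'_mem (Multiset.toFinset_nonempty.2 h)
  rwa [Multiset.mem_toFinset] at this

noncomputable def sstog (p : Finset (Fin N) × Multiset (Fin N)) :
    Finset (Fin N) × Multiset (Fin N) :=
  if h : p.1.1 + p.2 = 0 then p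
  else if ssj p h ∈ p.1 then (p.1.erase (ssj p h), ssj p h ::ₘ p.2)
  else (insert (ssj p h) p.1, p.2.erase (ssj p h))

lemma sstog_eq_mem (p : Finset (Fin N) × Multiset (Fin N)) (h : p.1.1 + p.2 ≠ 0)
    (hjA : ssj p h ∈ p.1) : sstog p = (p.1.erase (ssj p h), ssj p h ::ₘ p.2) := by
  rw [sstog, dif_neg h, if_pos hjA]

lemma sstog_eq_notMem (p : Finset (Fin N) × Multiset (Fin N)) (h : p.1.1 + p.2 ≠ 0)
    (hjA : ssj p h ∉ p.1) : sstog p = (insert (ssj p h) p.1, p.2.erase (ssj p h)) := by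
  rw [sstog, dif_neg h, if_neg hjA]

lemma ssj_mem_snd (p : Finset (Fin N) × Multiset (Fin N)) (h : p.1.1 + p.2 ≠ 0)
    (hjA : ssj p h ∉ p.1) : ssj p h ∈ p.2 := by
  rcases Multiset.mem_add.1 (ssj_mem p h) with h' | h'
  · exact absurd h' hjA
  · exact h'

lemma sstog_add (p : Finset (Fin N) × Multiset (Fin N)) (h : p.1.1 + p.2 ≠ 0) :
    (sstog p).1.1 + (sstog p).2 = p.1.1 + p.2 := by
  by_cases hjA : ssj p h ∈ p.1
  · rw [sstog_eq_mem p h hjA]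
    simp only [Finset.erase_val]
    rw [Multiset.add_cons, ← Multiset.cons_add, Multiset.cons_erase hjA]
  · rw [sstog_eq_notMem p h hjA]
    rw [Finset.insert_val_of_notMem hjA, Multiset.cons_add, ← Multiset.add_cons,
      Multiset.cons_erase (ssj_mem_snd p h hjA)]

lemma sstog_sstog (p : Finset (Fin N) × Multiset (Fin N)) (h : p.1.1 + p.2 ≠ 0) :
    sstog (sstog p) = p := by
  have hadd := sstog_add p h
  have h2 : (sstog p).1.1 + (sstog p).2 ≠ 0 := by rw [hadd]; exact h
  have hjj : ssj (sstog p) h2 = ssj p h := ssj_congr _ _ _ _ hadd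
  by_cases hjA : ssj p h ∈ p.1
  · have hs := sstog_eq_mem p h hjA
    have : ssj (sstog p) h2 ∉ (sstog p).1 := by
      rw [hjj, hs]; exact Finset.notMem_erase _ _
    rw [sstog_eq_notMem _ h2 this, hjj, hs]
    refine Prod.ext ?_ ?_
    · exact Finset.insert_erase hjA
    · exact Multiset.erase_cons_head _ _
  · have hs := sstog_eq_notMem p h hjA
    have : ssj (sstog p) h2 ∈ (sstog p).1 := by
      rw [hjj, hs]; exact Finset.mem_insert_self _ _
    rw [sstog_eq_mem _ h2 this, hjj, hs]
    refine Prod.ext ?_ ?_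
    · exact Finset.erase_insert hjA
    · exact Multiset.cons_erase (ssj_mem_snd p h hjA)

lemma sstog_card_sum (p : Finset (Fin N) × Multiset (Fin N)) (h : p.1.1 + p.2 ≠ 0) :
    (sstog p).1.card + Multiset.card (sstog p).2 = p.1.card + Multiset.card p.2 := by
  rw [Finset.card_def, Finset.card_def, ← Multiset.card_add, ← Multiset.card_add,
    sstog_add p h]

lemma sstog_sign (p : Finset (Fin N) × Multiset (Fin N)) (h : p.1.1 + p.2 ≠ 0) :
    ((-1 : MvPolynomial (Fin N) ℚ) ^ p.1.card * ((p.1.1 + p.2).map X).prod)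
      + ((-1 : MvPolynomial (Fin N) ℚ) ^ (sstog p).1.card
          * (((sstog p).1.1 + (sstog p).2).map X).prod) = 0 := by
  rw [sstog_add p h]
  by_cases hjA : ssj p h ∈ p.1
  · rw [sstog_eq_mem p h hjA]
    have : (p.1.erase (ssj p h)).card + 1 = p.1.card := Finset.card_erase_add_one hjA
    rw [← this, pow_succ]
    ring
  · rw [sstog_eq_notMem p h hjA]
    rw [Finset.card_insert_of_notMem hjA, pow_succ]
    ring

lemma sstog_ne (p : Finset (Fin N) × Multiset (Fin N)) (h : p.1.1 + p.2 ≠ 0) :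
    sstog p ≠ p := by
  intro he
  by_cases hjA : ssj p h ∈ p.1
  · have hs := sstog_eq_mem p h hjA
    rw [he] at hs
    have := congrArg (fun q => q.1.card) hs
    simp only at this
    rw [Finset.card_erase_of_mem hjA] at this
    have hpos : 0 < p.1.card := Finset.card_pos.2 ⟨_, hjA⟩
    omega
  · have hs := sstog_eq_notMem p h hjA
    rw [he] at hs
    have := congrArg (fun q => q.1.card) hs
    simp only at this
    rw [Finset.card_insert_of_notMem hjA] at this
    omega

/-- The key identity `∑_{i=0}^{k} (-1)^i e_i h_{k-i} = 0` for `k ≥ 1`. -/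
lemma esymm_hsymm_alt (N k : ℕ) (hk : 1 ≤ k) :
    ∑ i ∈ Finset.range (k + 1), (-1 : MvPolynomial (Fin N) ℚ) ^ i *
      esymm (Fin N) ℚ i * hsymm (Fin N) ℚ (k - i) = 0 := by
  classical
  set f : Finset (Fin N) × Multiset (Fin N) → MvPolynomial (Fin N) ℚ :=
    fun p => (-1) ^ p.1.card * ((p.1.1 + p.2).map X).prod with hf
  set D : Finset (Finset (Fin N) × Multiset (Fin N)) :=
    (Finset.range (k + 1)).biUnion (fun i => (Finset.powersetCard i Finset.univ) ×ˢ
      ((Finset.univ : Finset (Sym (Fin N) (k - i))).image Sym.toMultiset)) with hD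
  have hmem : ∀ p : Finset (Fin N) × Multiset (Fin N),
      p ∈ D ↔ p.1.card + Multiset.card p.2 = k := by
    intro p
    simp only [hD, Finset.mem_biUnion, Finset.mem_range, Finset.mem_product,
      Finset.mem_powersetCard_univ, Finset.mem_image, Finset.mem_univ, true_and]
    constructor
    · rintro ⟨i, hi, hcard, s, hs⟩
      have : Multiset.card p.2 = k - i := by rw [← hs]; exact s.2
      omega
    · intro hsum
      refine ⟨p.1.card, by omega, rfl, ⟨p.2, by omega⟩, rfl⟩
  have hdisj : (↑(Finset.range (k + 1)) : Set ℕ).PairwiseDisjoint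
      (fun i => (Finset.powersetCard i (Finset.univ : Finset (Fin N))) ×ˢ
        ((Finset.univ : Finset (Sym (Fin N) (k - i))).image Sym.toMultiset)) := by
    intro i _ j _ hij
    simp only [Function.onFun]
    rw [Finset.disjoint_left]
    rintro p hp hq
    simp only [Finset.mem_product, Finset.mem_powersetCard_univ] at hp hq
    exact hij (by omega)
  have hstep : ∑ i ∈ Finset.range (k + 1), (-1 : MvPolynomial (Fin N) ℚ) ^ i *
      esymm (Fin N) ℚ i * hsymm (Fin N) ℚ (k - i) = ∑ p ∈ D, f p := by
    rw [hD, Finset.sum_biUnion hdisj]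
    refine Finset.sum_congr rfl fun i _ => ?_
    rw [Finset.sum_product]
    rw [esymm, hsymm, mul_assoc, Finset.sum_mul_sum, Finset.mul_sum]
    refine Finset.sum_congr rfl fun A hA => ?_
    rw [Finset.mem_powersetCard_univ] at hA
    rw [Finset.mul_sum]
    rw [Finset.sum_image (fun s _ t _ hst => Sym.coe_injective hst)]
    refine Finset.sum_congr rfl fun s _ => ?_
    rw [hf]
    simp only [hA]
    rw [Multiset.map_add, Multiset.prod_add, Finset.prod_eq_multiset_prod]
    ring_nf
    rfl
  rw [hstep]
  have key : ∀ p ∈ D, p.1.1 + p.2 ≠ 0 := by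
    intro p hp h0
    rw [hmem] at hp
    have := congrArg Multiset.card h0
    rw [Multiset.card_add, ← Finset.card_def, Multiset.card_zero] at this
    omega
  refine Finset.sum_involution (fun p _ => sstog p) ?_ ?_ ?_ ?_
  · intro p hp
    exact sstog_sign p (key p hp)
  · intro p hp _
    exact sstog_ne p (key p hp)
  · intro p hp
    have hne := key p hp
    rw [hmem] at hp ⊢
    rw [sstog_card_sum p hne, hp]
  · intro p hp
    exact sstog_sstog p (key p hp)

/-! ### Universal polynomials: `h` in terms of `e` and vice versa -/

lemma hsymm_esymm_alt (N k : ℕ) (hk : 1 ≤ k) :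
    ∑ i ∈ Finset.range (k + 1), (-1 : MvPolynomial (Fin N) ℚ) ^ i *
      hsymm (Fin N) ℚ i * esymm (Fin N) ℚ (k - i) = 0 := by
  have h := esymm_hsymm_alt N k hk
  rw [← Finset.sum_range_reflect]
  have hs : ∀ j ∈ Finset.range (k + 1),
      (-1 : MvPolynomial (Fin N) ℚ) ^ (k + 1 - 1 - j) * hsymm (Fin N) ℚ (k + 1 - 1 - j) *
        esymm (Fin N) ℚ (k - (k + 1 - 1 - j))
      = (-1 : MvPolynomial (Fin N) ℚ) ^ k *
          ((-1) ^ j * esymm (Fin N) ℚ j * hsymm (Fin N) ℚ (k - j)) := by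
    intro j hj
    rw [Finset.mem_range] at hj
    have h1 : k + 1 - 1 - j = k - j := by omega
    have h2 : k - (k - j) = j := by omega
    rw [h1, h2]
    have h3 : (-1 : MvPolynomial (Fin N) ℚ) ^ (k - j) * (-1) ^ j = (-1) ^ k := by
      rw [← pow_add]; congr 1; omega
    rw [← h3]
    ring_nf
    rw [mul_comm j 2, pow_mul]
    norm_num
  rw [Finset.sum_congr rfl hs, ← Finset.mul_sum, h, mul_zero]

lemma hsymm_succ_eq (N k : ℕ) :
    hsymm (Fin N) ℚ (k + 1) =
      ∑ i ∈ Finset.range (k + 1), (-1 : MvPolynomial (Fin N) ℚ) ^ i *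
        esymm (Fin N) ℚ (i + 1) * hsymm (Fin N) ℚ (k - i) := by
  have h := esymm_hsymm_alt N (k + 1) (by omega)
  rw [Finset.sum_range_succ'] at h
  simp only [Nat.add_sub_add_right, pow_zero, one_mul, esymm_zero, Nat.sub_zero] at h
  have hs : ∀ i ∈ Finset.range (k + 1),
      (-1 : MvPolynomial (Fin N) ℚ) ^ (i + 1) * esymm (Fin N) ℚ (i + 1) *
        hsymm (Fin N) ℚ (k - i)
      = -((-1 : MvPolynomial (Fin N) ℚ) ^ i * esymm (Fin N) ℚ (i + 1) *
          hsymm (Fin N) ℚ (k - i)) := fun i _ => by rw [pow_succ]; ring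
  rw [Finset.sum_congr rfl hs, Finset.sum_neg_distrib] at h
  linear_combination h

lemma esymm_succ_eq (N k : ℕ) :
    esymm (Fin N) ℚ (k + 1) =
      ∑ i ∈ Finset.range (k + 1), (-1 : MvPolynomial (Fin N) ℚ) ^ i *
        hsymm (Fin N) ℚ (i + 1) * esymm (Fin N) ℚ (k - i) := by
  have h := hsymm_esymm_alt N (k + 1) (by omega)
  rw [Finset.sum_range_succ'] at h
  simp only [Nat.add_sub_add_right, pow_zero, one_mul, hsymm_zero, Nat.sub_zero] at h
  have hs : ∀ i ∈ Finset.range (k + 1),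
      (-1 : MvPolynomial (Fin N) ℚ) ^ (i + 1) * hsymm (Fin N) ℚ (i + 1) *
        esymm (Fin N) ℚ (k - i)
      = -((-1 : MvPolynomial (Fin N) ℚ) ^ i * hsymm (Fin N) ℚ (i + 1) *
          esymm (Fin N) ℚ (k - i)) := fun i _ => by rw [pow_succ]; ring
  rw [Finset.sum_congr rfl hs, Finset.sum_neg_distrib] at h
  linear_combination h

/-- Universal polynomial expressing `h_j` in terms of `e_1, e_2, …` (and by the
symmetry of the relation, also `e_j` in terms of `h_1, h_2, …`). -/
noncomputable def Hhat : ℕ → MvPolynomial ℕ ℚ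
  | 0 => 1
  | (k + 1) => ∑ i ∈ Finset.range (k + 1),
      (-1 : MvPolynomial ℕ ℚ) ^ i * X i * Hhat (k - i)
  decreasing_by exact Nat.lt_succ_of_le (Nat.sub_le k i)

lemma aeval_esymm_Hhat (N j : ℕ) :
    aeval (fun t => esymm (Fin N) ℚ (t + 1)) (Hhat j) = hsymm (Fin N) ℚ j := by
  induction j using Nat.strong_induction_on with
  | _ j ih =>
    match j with
    | 0 => rw [Hhat]; simp [hsymm_zero]
    | (k + 1) =>
      rw [Hhat, map_sum]
      have hs : ∀ i ∈ Finset.range (k + 1),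
          aeval (fun t => esymm (Fin N) ℚ (t + 1))
              ((-1 : MvPolynomial ℕ ℚ) ^ i * X i * Hhat (k - i))
          = (-1 : MvPolynomial (Fin N) ℚ) ^ i * esymm (Fin N) ℚ (i + 1) *
              hsymm (Fin N) ℚ (k - i) := by
        intro i hi
        rw [map_mul, map_mul, map_pow, map_neg, map_one, aeval_X,
          ih (k - i) (by omega)]
      rw [Finset.sum_congr rfl hs, ← hsymm_succ_eq]

lemma aeval_hsymm_Hhat (N j : ℕ) :
    aeval (fun t => hsymm (Fin N) ℚ (t + 1)) (Hhat j) = esymm (Fin N) ℚ j := by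
  induction j using Nat.strong_induction_on with
  | _ j ih =>
    match j with
    | 0 => rw [Hhat]; simp [esymm_zero]
    | (k + 1) =>
      rw [Hhat, map_sum]
      have hs : ∀ i ∈ Finset.range (k + 1),
          aeval (fun t => hsymm (Fin N) ℚ (t + 1))
              ((-1 : MvPolynomial ℕ ℚ) ^ i * X i * Hhat (k - i))
          = (-1 : MvPolynomial (Fin N) ℚ) ^ i * hsymm (Fin N) ℚ (i + 1) *
              esymm (Fin N) ℚ (k - i) := by
        intro i hi
        rw [map_mul, map_mul, map_pow, map_neg, map_one, aeval_X,
          ih (k - i) (by omega)]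
      rw [Finset.sum_congr rfl hs, ← esymm_succ_eq]

/-- The universal "ω-involution" substitution. -/
noncomputable def Ghat : MvPolynomial ℕ ℚ →ₐ[ℚ] MvPolynomial ℕ ℚ :=
  aeval (fun t => Hhat (t + 1))

lemma eps_Ghat (N : ℕ) (Q : MvPolynomial ℕ ℚ) :
    aeval (fun t => esymm (Fin N) ℚ (t + 1)) (Ghat Q)
      = aeval (fun t => hsymm (Fin N) ℚ (t + 1)) Q := by
  have h : (aeval (fun t => esymm (Fin N) ℚ (t + 1))).comp Ghat
      = aeval (R := ℚ) (fun t => hsymm (Fin N) ℚ (t + 1)) := by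
    apply MvPolynomial.algHom_ext
    intro t
    simp only [AlgHom.comp_apply, Ghat, aeval_X]
    exact aeval_esymm_Hhat N (t + 1)
  exact DFunLike.congr_fun h Q

lemma eta_Ghat (N : ℕ) (Q : MvPolynomial ℕ ℚ) :
    aeval (fun t => hsymm (Fin N) ℚ (t + 1)) (Ghat Q)
      = aeval (fun t => esymm (Fin N) ℚ (t + 1)) Q := by
  have h : (aeval (fun t => hsymm (Fin N) ℚ (t + 1))).comp Ghat
      = aeval (R := ℚ) (fun t => esymm (Fin N) ℚ (t + 1)) := by
    apply MvPolynomial.algHom_ext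
    intro t
    simp only [AlgHom.comp_apply, Ghat, aeval_X]
    exact aeval_hsymm_Hhat N (t + 1)
  exact DFunLike.congr_fun h Q

lemma eps_zero (Q : MvPolynomial ℕ ℚ)
    (h : ∀ N, aeval (fun t => esymm (Fin N) ℚ (t + 1)) Q = 0) : Q = 0 := by
  classical
  obtain ⟨n, hn⟩ : ∃ n, ↑Q.vars ⊆ Set.range (Fin.val : Fin n → ℕ) :=
    ⟨Q.vars.sup id + 1, by
      intro v hv
      exact ⟨⟨v, Nat.lt_succ_of_le
        (by simpa using Finset.le_sup (f := id) (Finset.mem_coe.1 hv))⟩, rfl⟩⟩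
  obtain ⟨Q', hQ⟩ := exists_rename_eq_of_vars_subset_range Q Fin.val Fin.val_injective hn
  have h0 := h n
  rw [← hQ, aeval_rename] at h0
  have hz : esymmAlgHom (Fin n) ℚ n Q' = 0 := by
    apply Subtype.ext
    rw [esymmAlgHom_apply]
    rw [show (0 : symmetricSubalgebra (Fin n) ℚ).val = 0 from rfl]
    rw [← h0]
    rfl
  have hQ'0 : Q' = 0 :=
    esymmAlgHom_fin_injective (R := ℚ) (n := n) (m := n) le_rfl (by rw [hz, map_zero])
  rw [← hQ, hQ'0, map_zero]

lemma Ghat_Ghat (Q : MvPolynomial ℕ ℚ) : Ghat (Ghat Q) = Q := by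
  have h : ∀ N, aeval (fun t => esymm (Fin N) ℚ (t + 1)) (Ghat (Ghat Q) - Q) = 0 := by
    intro N
    rw [map_sub, eps_Ghat, eta_Ghat, sub_self]
  exact sub_eq_zero.1 (eps_zero _ h)

lemma eta_zero (Q : MvPolynomial ℕ ℚ)
    (h : ∀ N, aeval (fun t => hsymm (Fin N) ℚ (t + 1)) Q = 0) : Q = 0 := by
  have h2 : ∀ N, aeval (fun t => esymm (Fin N) ℚ (t + 1)) (Ghat Q) = 0 := by
    intro N
    rw [eps_Ghat]
    exact h N
  have h3 : Ghat Q = 0 := eps_zero _ h2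
  have h4 := congrArg Ghat h3
  rw [Ghat_Ghat, map_zero] at h4
  exact h4

/-! ### Universal Jacobi–Trudi determinants -/

noncomputable def HIntU (k : ℤ) : MvPolynomial ℕ ℚ :=
  if k < 0 then 0 else if k.toNat = 0 then 1 else X (k.toNat - 1)

noncomputable def SU (m : ℕ) (γ : Fin m → ℕ) : MvPolynomial ℕ ℚ :=
  Matrix.det (Matrix.of fun i j : Fin m => HIntU ((γ i : ℤ) + (j : ℤ) - (i : ℤ)))

lemma eta_HIntU (N : ℕ) (k : ℤ) :
    aeval (fun t => hsymm (Fin N) ℚ (t + 1)) (HIntU k) = hInt N k := by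
  unfold HIntU hInt
  split_ifs with h1 h2
  · simp
  · rw [h2, hsymm_zero, map_one]
  · rw [aeval_X]
    congr 1
    omega

lemma superElem_zero (a b : ℕ) : superElem a b 0 = 1 := by
  unfold superElem
  simp [hsymm_zero, esymm_zero]

lemma psi_HIntU (a b : ℕ) (k : ℤ) :
    aeval (fun t => superElem a b (t + 1)) (HIntU k) = superEInt a b k := by
  unfold HIntU superEInt
  split_ifs with h1 h2
  · simp
  · rw [h2, superElem_zero, map_one]
  · rw [aeval_X]
    congr 1
    omega

lemma algHom_det {S : Type*} [CommRing S] [Algebra ℚ S] {m : ℕ} (f : MvPolynomial ℕ ℚ →ₐ[ℚ] S)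
    (M : Matrix (Fin m) (Fin m) (MvPolynomial ℕ ℚ)) :
    f M.det = (M.map f).det := by
  simpa using f.toRingHom.map_det M

lemma eta_SU (N m : ℕ) (γ : Fin m → ℕ) :
    aeval (fun t => hsymm (Fin N) ℚ (t + 1)) (SU m γ) = ordSchur N m γ := by
  unfold SU ordSchur
  rw [algHom_det]
  congr 1
  apply Matrix.ext
  intro i j
  simp only [Matrix.map_apply, Matrix.of_apply]
  exact eta_HIntU N _

lemma psi_SU (a b m : ℕ) (γ : Fin m → ℕ) :
    aeval (fun t => superElem a b (t + 1)) (SU m γ) = supSchur a b m γ := by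
  unfold SU supSchur
  rw [algHom_det]
  congr 1
  apply Matrix.ext
  intro i j
  simp only [Matrix.map_apply, Matrix.of_apply]
  exact psi_HIntU a b _

/-- For partitions `α, β` lying in `Γ(a,b)` (i.e. `α_j ≤ b` for `j > a`), the
supersymmetric Schur polynomials multiply according to the Littlewood–Richardson rule
`π_α π_β = ∑_γ c_{αβ}^γ π_γ`, where `c_{αβ}^γ` are the Littlewood–Richardson
coefficients, characterized as the structure constants of the ordinary Schur
polynomials (in any number of variables). -/
theorem supSchur_littlewood_richardson (a b mα mβ : ℕ)
    (α : Fin mα → ℕ) (β : Fin mβ → ℕ) (hα : Antitone α) (hβ : Antitone β)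
    (hαΓ : ∀ j : Fin mα, a ≤ (j : ℕ) → α j ≤ b)
    (hβΓ : ∀ j : Fin mβ, a ≤ (j : ℕ) → β j ≤ b)
    (c : (Fin (mα + mβ) → ℕ) → ℚ)
    (hc : ∀ N : ℕ,
      ordSchur N mα α * ordSchur N mβ β =
        ∑ γ ∈ partFinset (mα + mβ) (∑ i, α i + ∑ i, β i),
          MvPolynomial.C (c γ) * ordSchur N (mα + mβ) γ) :
    supSchur a b mα α * supSchur a b mβ β =
      ∑ γ ∈ partFinset (mα + mβ) (∑ i, α i + ∑ i, β i),
        MvPolynomial.C (c γ) * supSchur a b (mα + mβ) γ := by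
  classical
  have hP : SU mα α * SU mβ β -
      ∑ γ ∈ partFinset (mα + mβ) (∑ i, α i + ∑ i, β i),
        MvPolynomial.C (c γ) * SU (mα + mβ) γ = 0 := by
    apply eta_zero
    intro N
    rw [map_sub, map_mul, map_sum, eta_SU, eta_SU]
    have hs : ∀ γ ∈ partFinset (mα + mβ) (∑ i, α i + ∑ i, β i),
        aeval (fun t => hsymm (Fin N) ℚ (t + 1))
            (MvPolynomial.C (c γ) * SU (mα + mβ) γ)
          = MvPolynomial.C (c γ) * ordSchur N (mα + mβ) γ := by
      intro γ _
      rw [map_mul, eta_SU, aeval_C, MvPolynomial.algebraMap_eq]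
    rw [Finset.sum_congr rfl hs, ← hc N, sub_self]
  have h2 := congrArg (aeval (fun t => superElem a b (t + 1))) hP
  rw [map_zero, map_sub, map_mul, map_sum, psi_SU, psi_SU] at h2
  have hs : ∀ γ ∈ partFinset (mα + mβ) (∑ i, α i + ∑ i, β i),
      aeval (fun t => superElem a b (t + 1))
          (MvPolynomial.C (c γ) * SU (mα + mβ) γ)
        = MvPolynomial.C (c γ) * supSchur a b (mα + mβ) γ := by
    intro γ _
    rw [map_mul, psi_SU, aeval_C, MvPolynomial.algebraMap_eq]
  rw [Finset.sum_congr rfl hs] at h2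
  exact sub_eq_zero.1 h2
end
end
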